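/- arXiv:2511.18247 — 6 statements merged into one kernel-verified Lean document; each statement's English description precedes it below -/
import Mathlib

section
/- Let H, S, K be integers with H ≥ 2, S ≥ 1, K ≥ 1, let h be an integer with 0 ≤ h ≤ H−2, let μ > 0 and α, γ ∈ [0,1] be real numbers, and define the K-independent bonus b^k(n) = (H−h−1)·√((0.5·S·ln 2 + μ·(k+1)^α)/n) for integers k ≥ 0 and n ≥ 1. Then ∑_{n=1}^{K} exp(−2n·(b^{max(n, ⌈K^γ⌉)}(n)/(H−h−1))²) ≤ 2^{−S}·K·exp(−2μ·K^{γα}). -/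
/-- Lemma 1 of the paper, K-independent case.
The K-independent bonus-sum bound. -/
theorem bonus_sum_bound_K_independent
    (H S K : ℕ) (hH : 2 ≤ H) (hS : 1 ≤ S) (hK : 1 ≤ K)
    (h : ℕ) (hh : h ≤ H - 2) (μ α γ : ℝ) (hμ : 0 < μ)
    (hα : α ∈ Set.Icc (0 : ℝ) 1) (hγ : γ ∈ Set.Icc (0 : ℝ) 1)
    (b : ℕ → ℕ → ℝ)
    (hb : ∀ k n : ℕ, 1 ≤ n →
      b k n = ((H : ℝ) - h - 1) *
        Real.sqrt ((0.5 * S * Real.log 2 + μ * ((k : ℝ) + 1) ^ α) / n)) :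
    ∑ n ∈ Finset.Icc 1 K,
        Real.exp (-2 * n *
          (b (max n ⌈(K : ℝ) ^ γ⌉₊) n / ((H : ℝ) - h - 1)) ^ 2)
      ≤ (2 : ℝ) ^ (-(S : ℝ)) * K * Real.exp (-2 * μ * (K : ℝ) ^ (γ * α)) := by
  obtain ⟨hα0, hα1⟩ := hα
  obtain ⟨hγ0, hγ1⟩ := hγ
  have hh2 : (h : ℝ) + 2 ≤ (H : ℝ) := by
    have : h + 2 ≤ H := by omega
    exact_mod_cast this
  have hH1 : (1 : ℝ) ≤ (H : ℝ) - h - 1 := by linarith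
  have hne : ((H : ℝ) - h - 1) ≠ 0 := by linarith
  have hlog2 : (0 : ℝ) < Real.log 2 := Real.log_pos (by norm_num)
  set c : ℝ := (2 : ℝ) ^ (-(S : ℝ)) * Real.exp (-2 * μ * (K : ℝ) ^ (γ * α)) with hc
  have key : ∀ n ∈ Finset.Icc 1 K,
      Real.exp (-2 * n *
        (b (max n ⌈(K : ℝ) ^ γ⌉₊) n / ((H : ℝ) - h - 1)) ^ 2) ≤ c := by
    intro n hn
    simp only [Finset.mem_Icc] at hn
    have hn1 : 1 ≤ n := hn.1
    have hnpos : (0 : ℝ) < n := by exact_mod_cast hn1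
    set k := max n ⌈(K : ℝ) ^ γ⌉₊ with hk
    rw [hb k n hn1]
    have hinner : (0 : ℝ) ≤ (0.5 * S * Real.log 2 + μ * ((k : ℝ) + 1) ^ α) / n := by
      apply div_nonneg _ hnpos.le
      have : (0 : ℝ) ≤ μ * ((k : ℝ) + 1) ^ α :=
        mul_nonneg hμ.le (Real.rpow_nonneg (by positivity) _)
      have hS0 : (0 : ℝ) ≤ (S : ℝ) := Nat.cast_nonneg _
      nlinarith
    have hsq : (((H : ℝ) - h - 1) *
        Real.sqrt ((0.5 * S * Real.log 2 + μ * ((k : ℝ) + 1) ^ α) / n)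
        / ((H : ℝ) - h - 1)) ^ 2
        = (0.5 * S * Real.log 2 + μ * ((k : ℝ) + 1) ^ α) / n := by
      rw [mul_comm, mul_div_assoc, div_self hne, mul_one, Real.sq_sqrt hinner]
    rw [hsq]
    have harg : -2 * n * ((0.5 * S * Real.log 2 + μ * ((k : ℝ) + 1) ^ α) / n)
        = -((S : ℝ) * Real.log 2) + (-2 * μ * ((k : ℝ) + 1) ^ α) := by
      field_simp
      ring
    rw [harg, Real.exp_add]
    have h1 : Real.exp (-((S : ℝ) * Real.log 2)) = (2 : ℝ) ^ (-(S : ℝ)) := by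
      rw [Real.rpow_def_of_pos (by norm_num : (0:ℝ) < 2)]
      ring_nf
    -- bound on exponent
    have hKγ : (K : ℝ) ^ γ ≤ (k : ℝ) + 1 := by
      have h1' : (K : ℝ) ^ γ ≤ (⌈(K : ℝ) ^ γ⌉₊ : ℝ) := Nat.le_ceil _
      have h2' : (⌈(K : ℝ) ^ γ⌉₊ : ℝ) ≤ (k : ℝ) := by
        exact_mod_cast Nat.le_max_right n _
      linarith
    have hexp : (K : ℝ) ^ (γ * α) ≤ ((k : ℝ) + 1) ^ α := by
      rw [Real.rpow_mul (Nat.cast_nonneg K)]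
      exact Real.rpow_le_rpow (Real.rpow_nonneg (Nat.cast_nonneg K) _) hKγ hα0
    have h2 : Real.exp (-2 * μ * ((k : ℝ) + 1) ^ α)
        ≤ Real.exp (-2 * μ * (K : ℝ) ^ (γ * α)) := by
      apply Real.exp_le_exp.mpr
      nlinarith
    rw [h1, hc]
    exact mul_le_mul_of_nonneg_left h2 (Real.rpow_nonneg (by norm_num) _)
  calc ∑ n ∈ Finset.Icc 1 K,
        Real.exp (-2 * n *
          (b (max n ⌈(K : ℝ) ^ γ⌉₊) n / ((H : ℝ) - h - 1)) ^ 2)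
      ≤ ∑ _n ∈ Finset.Icc 1 K, c := Finset.sum_le_sum key
    _ = (K : ℝ) * c := by
        rw [Finset.sum_const, Nat.card_Icc]
        simp [nsmul_eq_mul]
    _ = (2 : ℝ) ^ (-(S : ℝ)) * K * Real.exp (-2 * μ * (K : ℝ) ^ (γ * α)) := by
        rw [hc]; ring
end

section
/- Let (𝒮, 𝒜, P*, r, H) be a finite-horizon MDP with global Q*-gap gap* > 0, and let (P̃, r̃) be another transition kernel and reward function on the same (𝒮, 𝒜, H) such that for all (s,a) and all h with 0 ≤ h ≤ H−2, ‖P̃_h(·|s,a) − P*_h(·|s,a)‖₁ ≤ gap*/(2H(H−h−1)) and |r̃_h(s,a) − r_h(s,a)| ≤ gap*/(4H), and such that r̃_{H−1} = r_{H−1}. Then for every (s,h), the set of optimal actions Ã*_h(s) of the MDP (𝒮,𝒜,P̃,r̃,H) is contained in the set of optimal actions A*_h(s) of (𝒮,𝒜,P*,r,H); in particular, every deterministic Markov policy that is optimal for (P̃,r̃) satisfies π_h(s) ∈ A*_h(s) for all (s,h), i.e., it is optimal for (P*,r). -/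
/-- A probability mass function on a finite type, as a real-valued function. -/
def IsPMF {S : Type*} [Fintype S] (p : S → ℝ) : Prop :=
  (∀ s, 0 ≤ p s) ∧ ∑ s, p s = 1

/-- ℓ₁ distance between two functions on a finite type. -/
noncomputable def l1dist {S : Type*} [Fintype S] (p q : S → ℝ) : ℝ :=
  ∑ s, |p s - q s|

/-- Value function of a deterministic Markov policy, by backward recursion on the
number `t` of remaining steps; the value at stage `h` with horizon `H` is
`Vpi P r pol (H - h) h`. -/
noncomputable def Vpi {S A : Type*} [Fintype S]
    (P : ℕ → S → A → S → ℝ) (r : ℕ → S → A → ℝ) (pol : ℕ → S → A) :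
    ℕ → ℕ → S → ℝ
  | 0, _, _ => 0
  | t + 1, h, s =>
      r h s (pol h s) + ∑ s' : S, P h s (pol h s) s' * Vpi P r pol t (h + 1) s'

/-- Action-value function of a deterministic Markov policy in the horizon-`H` MDP. -/
noncomputable def Qpi {S A : Type*} [Fintype S]
    (P : ℕ → S → A → S → ℝ) (r : ℕ → S → A → ℝ) (pol : ℕ → S → A)
    (H h : ℕ) (s : S) (a : A) : ℝ :=
  r h s a + ∑ s' : S, P h s a s' * Vpi P r pol (H - (h + 1)) (h + 1) s'

/-- Optimal value function: supremum over all deterministic Markov policies. -/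
noncomputable def Vstar {S A : Type*} [Fintype S]
    (P : ℕ → S → A → S → ℝ) (r : ℕ → S → A → ℝ) (H h : ℕ) (s : S) : ℝ :=
  ⨆ pol : ℕ → S → A, Vpi P r pol (H - h) h s

/-- Optimal action-value function. -/
noncomputable def Qstar {S A : Type*} [Fintype S]
    (P : ℕ → S → A → S → ℝ) (r : ℕ → S → A → ℝ) (H h : ℕ) (s : S) (a : A) : ℝ :=
  r h s a + ∑ s' : S, P h s a s' * Vstar P r H (h + 1) s'

/-- The set of optimal actions `A*_h(s) = argmax_a Q*_h(s,a)`. -/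
def OptActions {S A : Type*} [Fintype S]
    (P : ℕ → S → A → S → ℝ) (r : ℕ → S → A → ℝ) (H h : ℕ) (s : S) : Set A :=
  {a | ∀ a', Qstar P r H h s a' ≤ Qstar P r H h s a}

set_option linter.unusedSectionVars false
section Aux
variable {S A : Type*} [Fintype S] [Fintype A] [Nonempty S] [Nonempty A]

lemma le_ciSup_fin (f : A → ℝ) (a : A) : f a ≤ ⨆ a, f a :=
  le_ciSup (Set.Finite.bddAbove (Set.finite_range f)) a

/-- Bellman optimal value by backward recursion. -/
noncomputable def VB (P : ℕ → S → A → S → ℝ) (r : ℕ → S → A → ℝ) : ℕ → ℕ → S → ℝ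
  | 0, _, _ => 0
  | t + 1, h, s => ⨆ a : A, (r h s a + ∑ s' : S, P h s a s' * VB P r t (h + 1) s')

variable (P : ℕ → S → A → S → ℝ) (r : ℕ → S → A → ℝ) (H : ℕ)
variable (hP : ∀ h, h + 1 < H → ∀ s a, IsPMF (P h s a))
variable (hr : ∀ h, h < H → ∀ s a, r h s a ∈ Set.Icc (0:ℝ) 1)

include hP hr in
lemma VB_bounds : ∀ t h, h + t ≤ H → ∀ s, 0 ≤ VB P r t h s ∧ VB P r t h s ≤ t := by
  intro t
  induction t with
  | zero => intro h _ s; simp [VB]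
  | succ t ih =>
    intro h hht s
    have hrh := hr h (by omega) s
    have hsum : ∀ a : A, 0 ≤ ∑ s', P h s a s' * VB P r t (h+1) s' ∧
        (∑ s', P h s a s' * VB P r t (h+1) s') ≤ (t : ℝ) := by
      intro a
      rcases Nat.eq_zero_or_pos t with rfl | htpos
      · simp [VB]
      · have hPa := hP h (by omega) s a
        have hV := fun s' => ih (h+1) (by omega) s'
        constructor
        · exact Finset.sum_nonneg fun s' _ => mul_nonneg (hPa.1 s') (hV s').1
        · calc ∑ s', P h s a s' * VB P r t (h+1) s'
              ≤ ∑ s', P h s a s' * t :=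
                Finset.sum_le_sum fun s' _ =>
                  mul_le_mul_of_nonneg_left (hV s').2 (hPa.1 s')
            _ = t := by rw [← Finset.sum_mul, hPa.2, one_mul]
    constructor
    · obtain ⟨a0⟩ := ‹Nonempty A›
      refine le_trans ?_ (le_ciSup_fin _ a0)
      exact add_nonneg (hrh a0).1 (hsum a0).1
    · show VB P r (t+1) h s ≤ ((t+1 : ℕ) : ℝ)
      rw [VB]
      refine ciSup_le fun a => ?_
      push_cast
      have := (hrh a).2
      have := (hsum a).2
      linarith

include hP hr in
lemma Vpi_le_VB : ∀ t h, h + t ≤ H → ∀ (pol : ℕ → S → A) s,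
    Vpi P r pol t h s ≤ VB P r t h s := by
  intro t
  induction t with
  | zero => intro h _ pol s; simp [Vpi, VB]
  | succ t ih =>
    intro h hht pol s
    have key : Vpi P r pol (t+1) h s ≤
        r h s (pol h s) + ∑ s', P h s (pol h s) s' * VB P r t (h+1) s' := by
      rw [Vpi]
      rcases Nat.eq_zero_or_pos t with rfl | htpos
      · simp [Vpi, VB]
      · have hPa := hP h (by omega) s (pol h s)
        have : ∑ s', P h s (pol h s) s' * Vpi P r pol t (h+1) s'
            ≤ ∑ s', P h s (pol h s) s' * VB P r t (h+1) s' :=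
          Finset.sum_le_sum fun s' _ =>
            mul_le_mul_of_nonneg_left (ih (h+1) (by omega) pol s') (hPa.1 s')
        linarith
    refine key.trans ?_
    rw [VB]
    exact le_ciSup_fin (fun a => r h s a + ∑ s' : S, P h s a s' * VB P r t (h + 1) s') (pol h s)

/-- Greedy policy w.r.t. the Bellman values. -/
noncomputable def greedy : ℕ → S → A := fun h s =>
  Classical.choose (Finite.exists_max
    (fun a : A => r h s a + ∑ s' : S, P h s a s' * VB P r (H - h - 1) (h + 1) s'))

lemma greedy_spec (h : ℕ) (s : S) (a : A) :
    r h s a + ∑ s' : S, P h s a s' * VB P r (H - h - 1) (h + 1) s' ≤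
    r h s (greedy P r H h s) + ∑ s' : S, P h s (greedy P r H h s) s' * VB P r (H - h - 1) (h + 1) s' :=
  Classical.choose_spec (Finite.exists_max
    (fun a : A => r h s a + ∑ s' : S, P h s a s' * VB P r (H - h - 1) (h + 1) s')) a

lemma Vpi_greedy : ∀ t, t ≤ H → ∀ s,
    Vpi P r (greedy P r H) t (H - t) s = VB P r t (H - t) s := by
  intro t
  induction t with
  | zero => intro _ s; simp [Vpi, VB]
  | succ t ih =>
    intro hle s
    have hh1 : H - (t+1) + 1 = H - t := by omega
    have hg : H - (H - (t+1)) - 1 = t := by omega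
    rw [Vpi, VB, hh1]
    have hsum : ∀ a, ∑ s', P (H - (t+1)) s a s' * Vpi P r (greedy P r H) t (H - t) s'
        = ∑ s', P (H - (t+1)) s a s' * VB P r t (H - t) s' := by
      intro a
      exact Finset.sum_congr rfl fun s' _ => by rw [ih (by omega) s']
    rw [hsum]
    apply le_antisymm
    · exact le_ciSup_fin (fun a => r (H-(t+1)) s a + ∑ s', P (H-(t+1)) s a s' * VB P r t (H - t) s') _
    · refine ciSup_le fun a => ?_
      have := greedy_spec P r H (H - (t+1)) s a
      rw [hg, hh1] at this
      exact this

include hP hr in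
lemma Vstar_eq_VB : ∀ h, h ≤ H → ∀ s, Vstar P r H h s = VB P r (H - h) h s := by
  intro h hh s
  apply le_antisymm
  · exact ciSup_le fun pol => Vpi_le_VB P r H hP hr (H - h) h (by omega) pol s
  · have hgr := Vpi_greedy P r H (H - h) (by omega) s
    rw [show H - (H - h) = h by omega] at hgr
    rw [← hgr]
    exact le_ciSup ⟨VB P r (H - h) h s, by
      rintro x ⟨pol, rfl⟩; exact Vpi_le_VB P r H hP hr (H - h) h (by omega) pol s⟩ _

include hP hr in
lemma Qstar_eq_VB (h : ℕ) (hh : h < H) (s : S) (a : A) :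
    Qstar P r H h s a = r h s a + ∑ s' : S, P h s a s' * VB P r (H - h - 1) (h + 1) s' := by
  unfold Qstar
  rw [show H - h - 1 = H - (h+1) by omega]
  congr 1
  exact Finset.sum_congr rfl fun s' _ => by
    rw [Vstar_eq_VB P r H hP hr (h+1) (by omega) s']

include hP hr in
lemma Vstar_bellman (h : ℕ) (hh : h < H) (s : S) :
    Vstar P r H h s = ⨆ a : A, Qstar P r H h s a := by
  rw [Vstar_eq_VB P r H hP hr h hh.le s, show H - h = (H - h - 1) + 1 by omega, VB]
  congr 1
  funext a
  rw [Qstar_eq_VB P r H hP hr h hh s a]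


lemma abs_sum_pmf_mul_sub (p q V : S → ℝ) (M : ℝ)
    (hp : IsPMF p) (hq : IsPMF q) (hV : ∀ s, 0 ≤ V s ∧ V s ≤ M) :
    |∑ s, p s * V s - ∑ s, q s * V s| ≤ (∑ s, |p s - q s|) * (M / 2) := by
  have key : ∑ s, p s * V s - ∑ s, q s * V s = ∑ s, (p s - q s) * (V s - M/2) := by
    have : ∀ s : S, (p s - q s) * (V s - M/2)
        = p s * V s - q s * V s - (p s * (M/2) - q s * (M/2)) := by intro s; ring
    rw [Finset.sum_congr rfl fun s _ => this s]
    simp only [Finset.sum_sub_distrib, ← Finset.sum_mul, hp.2, hq.2]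
    ring
  rw [key]
  calc |∑ s, (p s - q s) * (V s - M/2)| ≤ ∑ s, |(p s - q s) * (V s - M/2)| :=
        Finset.abs_sum_le_sum_abs _ _
    _ ≤ ∑ s, |p s - q s| * (M/2) := by
        refine Finset.sum_le_sum fun s _ => ?_
        rw [abs_mul]
        refine mul_le_mul_of_nonneg_left ?_ (abs_nonneg _)
        have h1 := (hV s).1
        have h2 := (hV s).2
        rw [abs_le]; constructor <;> linarith
    _ = (∑ s, |p s - q s|) * (M/2) := by rw [Finset.sum_mul]

lemma abs_sum_pmf_sub (q : S → ℝ) (hq : IsPMF q) (x y : S → ℝ) (Δ : ℝ)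
    (hΔ : ∀ s, |x s - y s| ≤ Δ) :
    |∑ s, q s * x s - ∑ s, q s * y s| ≤ Δ := by
  have key : ∑ s, q s * x s - ∑ s, q s * y s = ∑ s, q s * (x s - y s) := by
    rw [← Finset.sum_sub_distrib]
    exact Finset.sum_congr rfl fun s _ => by ring
  rw [key]
  calc |∑ s, q s * (x s - y s)| ≤ ∑ s, |q s * (x s - y s)| := Finset.abs_sum_le_sum_abs _ _
    _ ≤ ∑ s, q s * Δ := by
        refine Finset.sum_le_sum fun s _ => ?_
        rw [abs_mul, abs_of_nonneg (hq.1 s)]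
        exact mul_le_mul_of_nonneg_left (hΔ s) (hq.1 s)
    _ = Δ := by rw [← Finset.sum_mul, hq.2, one_mul]

lemma abs_ciSup_sub_ciSup (f g : A → ℝ) (c : ℝ) (h : ∀ a, |f a - g a| ≤ c) :
    |(⨆ a, f a) - ⨆ a, g a| ≤ c := by
  have h1 : (⨆ a, f a) ≤ (⨆ a, g a) + c := by
    refine ciSup_le fun a => ?_
    have := (abs_le.1 (h a)).2
    have := le_ciSup_fin g a
    linarith
  have h2 : (⨆ a, g a) ≤ (⨆ a, f a) + c := by
    refine ciSup_le fun a => ?_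
    have := (abs_le.1 (h a)).1
    have := le_ciSup_fin f a
    linarith
  rw [abs_le]; constructor <;> linarith

end Aux

/-- Lemma 2 of the paper.
If `(P̃, r̃)` is close to `(P*, r)` relative to the global `Q*`-gap, then every
optimal action of the perturbed MDP is optimal for the true MDP; in particular any
deterministic Markov policy optimal for `(P̃, r̃)` is optimal for `(P*, r)`. -/
theorem optimal_actions_of_perturbed_subset
    {𝒮 𝒜 : Type*} [Fintype 𝒮] [Fintype 𝒜] [Nonempty 𝒮] [Nonempty 𝒜]
    (H : ℕ) (hH : 1 ≤ H)
    (Pstar : ℕ → 𝒮 → 𝒜 → 𝒮 → ℝ) (r : ℕ → 𝒮 → 𝒜 → ℝ)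
    (Pt : ℕ → 𝒮 → 𝒜 → 𝒮 → ℝ) (rt : ℕ → 𝒮 → 𝒜 → ℝ)
    (hPstar : ∀ h, h + 1 < H → ∀ s a, IsPMF (Pstar h s a))
    (hPt : ∀ h, h + 1 < H → ∀ s a, IsPMF (Pt h s a))
    (hr : ∀ h, h < H → ∀ s a, r h s a ∈ Set.Icc (0 : ℝ) 1)
    (hrt : ∀ h, h < H → ∀ s a, rt h s a ∈ Set.Icc (0 : ℝ) 1)
    (gapstar : ℝ) (hgap_pos : 0 < gapstar)
    (hgap : ∀ h, h < H → ∀ s a, a ∉ OptActions Pstar r H h s →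
      gapstar ≤ (⨆ a', Qstar Pstar r H h s a') - Qstar Pstar r H h s a)
    (hPclose : ∀ h, h + 1 < H → ∀ s a,
      l1dist (Pt h s a) (Pstar h s a) ≤ gapstar / (2 * H * ((H : ℝ) - h - 1)))
    (hrclose : ∀ h, h + 1 < H → ∀ s a,
      |rt h s a - r h s a| ≤ gapstar / (4 * H))
    (hrlast : ∀ s a, rt (H - 1) s a = r (H - 1) s a) :
    (∀ h, h < H → ∀ s, OptActions Pt rt H h s ⊆ OptActions Pstar r H h s) ∧
    (∀ pol : ℕ → 𝒮 → 𝒜,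
      (∀ h, h < H → ∀ s, Vpi Pt rt pol (H - h) h s = Vstar Pt rt H h s) →
      ∀ h, h < H → ∀ s, pol h s ∈ OptActions Pstar r H h s) := by
  have hHpos : (0:ℝ) < H := by exact_mod_cast hH
  have hH0 : (H:ℝ) ≠ 0 := ne_of_gt hHpos
  have hg2H : 0 ≤ gapstar / (2*H) := by positivity
  -- one-step perturbation bound
  have key : ∀ h, h + 1 < H → ∀ s a (Δ : ℝ), 0 ≤ Δ →
      (∀ s', |VB Pt rt (H - h - 1) (h+1) s' - VB Pstar r (H - h - 1) (h+1) s'| ≤ Δ) →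
      |(rt h s a + ∑ s', Pt h s a s' * VB Pt rt (H-h-1) (h+1) s') -
       (r h s a + ∑ s', Pstar h s a s' * VB Pstar r (H-h-1) (h+1) s')| ≤ gapstar/(2*H) + Δ := by
    intro h hh s a Δ hΔ0 hΔ
    have hcast : ((H - h - 1 : ℕ) : ℝ) = (H:ℝ) - h - 1 := by
      rw [Nat.cast_sub (by omega : 1 ≤ H - h), Nat.cast_sub (by omega : h ≤ H), Nat.cast_one]
    have htpos : (0:ℝ) < ((H - h - 1 : ℕ) : ℝ) := by
      have : 1 ≤ H - h - 1 := by omega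
      exact_mod_cast Nat.lt_of_lt_of_le Nat.zero_lt_one this
    have hVb : ∀ s', 0 ≤ VB Pt rt (H-h-1) (h+1) s' ∧
        VB Pt rt (H-h-1) (h+1) s' ≤ ((H-h-1:ℕ):ℝ) :=
      fun s' => VB_bounds Pt rt H hPt hrt (H-h-1) (h+1) (by omega) s'
    have hb1 := hrclose h hh s a
    have hb2 : |∑ s', Pt h s a s' * VB Pt rt (H-h-1) (h+1) s' -
        ∑ s', Pstar h s a s' * VB Pt rt (H-h-1) (h+1) s'| ≤ gapstar/(4*H) := by
      have h2 := abs_sum_pmf_mul_sub (Pt h s a) (Pstar h s a)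
        (VB Pt rt (H-h-1) (h+1)) ((H-h-1:ℕ):ℝ) (hPt h hh s a) (hPstar h hh s a) hVb
      have hl1 := hPclose h hh s a
      have hl1' : (∑ s', |Pt h s a s' - Pstar h s a s'|) ≤
          gapstar / (2 * H * ((H-h-1:ℕ):ℝ)) := by rw [hcast]; exact hl1
      refine h2.trans ?_
      have := mul_le_mul_of_nonneg_right hl1' (by positivity : (0:ℝ) ≤ ((H-h-1:ℕ):ℝ)/2)
      refine this.trans (le_of_eq ?_)
      field_simp
      ring
    have hb3 : |∑ s', Pstar h s a s' * VB Pt rt (H-h-1) (h+1) s' -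
        ∑ s', Pstar h s a s' * VB Pstar r (H-h-1) (h+1) s'| ≤ Δ :=
      abs_sum_pmf_sub (Pstar h s a) (hPstar h hh s a) _ _ Δ hΔ
    have hq : gapstar/(4*H) + gapstar/(4*H) = gapstar/(2*H) := by field_simp; ring
    set B1 := ∑ s', Pt h s a s' * VB Pt rt (H-h-1) (h+1) s'
    set Bm := ∑ s', Pstar h s a s' * VB Pt rt (H-h-1) (h+1) s'
    set B2 := ∑ s', Pstar h s a s' * VB Pstar r (H-h-1) (h+1) s'
    have e : (rt h s a + B1) - (r h s a + B2)
        = (rt h s a - r h s a) + ((B1 - Bm) + (Bm - B2)) := by ring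
    rw [e]
    calc |(rt h s a - r h s a) + ((B1 - Bm) + (Bm - B2))|
        ≤ |rt h s a - r h s a| + |(B1 - Bm) + (Bm - B2)| := abs_add_le _ _
      _ ≤ |rt h s a - r h s a| + (|B1 - Bm| + |Bm - B2|) := by
          have := abs_add_le (B1 - Bm) (Bm - B2); linarith
      _ ≤ gapstar/(2*H) + Δ := by linarith
  -- Bellman value difference, by induction on remaining steps
  have VBdiff : ∀ t, 1 ≤ t → t ≤ H → ∀ s,
      |VB Pt rt t (H-t) s - VB Pstar r t (H-t) s| ≤ ((t:ℝ) - 1) * (gapstar/(2*H)) := by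
    intro t
    induction t with
    | zero => omega
    | succ t ih =>
      intro _ hle s
      rcases Nat.eq_zero_or_pos t with rfl | htpos
      · simp only [VB, Vpi, mul_zero, Finset.sum_const_zero, add_zero, Nat.zero_add]
        have heq : (fun a : 𝒜 => rt (H - 1) s a) = fun a => r (H - 1) s a :=
          funext fun a => hrlast s a
        rw [show H - (0 + 1) = H - 1 by omega, heq]
        norm_num
      · have hh : (H - (t+1)) + 1 < H := by omega
        have e1 : H - (H - (t+1)) - 1 = t := by omega
        have e2 : H - (t+1) + 1 = H - t := by omega
        have ihs : ∀ s', |VB Pt rt (H - (H-(t+1)) - 1) ((H-(t+1))+1) s' -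
            VB Pstar r (H - (H-(t+1)) - 1) ((H-(t+1))+1) s'| ≤ ((t:ℝ) - 1) * (gapstar/(2*H)) := by
          intro s'
          rw [e1, e2]
          exact ih htpos (by omega) s'
        have hΔ0 : (0:ℝ) ≤ ((t:ℝ) - 1) * (gapstar/(2*H)) := by
          have : (1:ℝ) ≤ (t:ℝ) := by exact_mod_cast htpos
          have := hg2H
          nlinarith
        have hk := key (H-(t+1)) hh s
        rw [VB, VB]
        refine (abs_ciSup_sub_ciSup _ _ (gapstar/(2*H) + ((t:ℝ) - 1) * (gapstar/(2*H)))
          (fun a => ?_)).trans (le_of_eq ?_)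
        · have := hk a (((t:ℝ) - 1) * (gapstar/(2*H))) hΔ0 ihs
          rw [e1] at this
          exact this
        · push_cast
          ring
  -- Q-value difference
  have Qdiff : ∀ h, h < H → ∀ s a,
      |Qstar Pt rt H h s a - Qstar Pstar r H h s a| ≤ ((H:ℝ) - 1) * (gapstar/(2*H)) := by
    intro h hh s a
    rcases Nat.lt_or_ge (h+1) H with hh1 | hh1
    · rw [Qstar_eq_VB Pt rt H hPt hrt h hh s a, Qstar_eq_VB Pstar r H hPstar hr h hh s a]
      have e2 : H - (H - h - 1) = h + 1 := by omega
      have hΔ : ∀ s', |VB Pt rt (H - h - 1) (h+1) s' - VB Pstar r (H - h - 1) (h+1) s'|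
          ≤ (((H - h - 1 : ℕ):ℝ) - 1) * (gapstar/(2*H)) := by
        intro s'
        have := VBdiff (H - h - 1) (by omega) (by omega) s'
        rw [e2] at this
        exact this
      have hΔ0 : (0:ℝ) ≤ (((H - h - 1:ℕ):ℝ) - 1) * (gapstar/(2*H)) := by
        have : (1:ℝ) ≤ ((H - h - 1:ℕ):ℝ) := by exact_mod_cast (by omega : 1 ≤ H - h - 1)
        nlinarith
      refine (key h hh1 s a _ hΔ0 hΔ).trans ?_
      have hle : ((H - h - 1:ℕ):ℝ) ≤ (H:ℝ) - 1 := by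
        have : ((H - h - 1:ℕ):ℝ) ≤ ((H - 1:ℕ):ℝ) := by exact_mod_cast (by omega : H - h - 1 ≤ H - 1)
        rw [Nat.cast_sub hH, Nat.cast_one] at this
        exact this
      nlinarith [hg2H]
    · -- last stage : h = H - 1
      have hVstar0 : ∀ (P' : ℕ → 𝒮 → 𝒜 → 𝒮 → ℝ) (r' : ℕ → 𝒮 → 𝒜 → ℝ) s',
          Vstar P' r' H (h+1) s' = 0 := by
        intro P' r' s'
        unfold Vstar
        rw [show H - (h+1) = 0 by omega]
        simp [Vpi, ciSup_const]
      have : Qstar Pt rt H h s a - Qstar Pstar r H h s a = rt h s a - r h s a := by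
        unfold Qstar
        simp [hVstar0]
      rw [this, show h = H - 1 by omega, hrlast s a, sub_self, abs_zero]
      have : (1:ℝ) ≤ (H:ℝ) := by exact_mod_cast hH
      nlinarith [hg2H]
  -- Part 1
  have part1 : ∀ h, h < H → ∀ s, OptActions Pt rt H h s ⊆ OptActions Pstar r H h s := by
    intro h hh s a ha
    by_contra hnot
    have hg := hgap h hh s a hnot
    obtain ⟨a', ha'⟩ := Finite.exists_max (fun a' => Qstar Pstar r H h s a')
    have hsup : (⨆ a', Qstar Pstar r H h s a') ≤ Qstar Pstar r H h s a' := ciSup_le ha'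
    have h1 := abs_le.1 (Qdiff h hh s a)
    have h2 := abs_le.1 (Qdiff h hh s a')
    have h3 : Qstar Pt rt H h s a' ≤ Qstar Pt rt H h s a := ha a'
    have hB : ((H:ℝ) - 1) * (gapstar/(2*H)) < gapstar / 2 := by
      have hHeq : (H:ℝ) * (gapstar/(2*H)) = gapstar/2 := by field_simp
      have : ((H:ℝ) - 1) * (gapstar/(2*H)) < (H:ℝ) * (gapstar/(2*H)) := by
        have hpos : (0:ℝ) < gapstar/(2*H) := by positivity
        nlinarith
      linarith
    linarith [h1.1, h1.2, h2.1, h2.2]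
  refine ⟨part1, ?_⟩
  -- Part 2
  intro pol hpol h hh s
  apply part1 h hh s
  have bellman := Vstar_bellman Pt rt H hPt hrt h hh s
  have hVstarH : ∀ s', Vstar Pt rt H H s' = 0 := by
    intro s'
    unfold Vstar
    rw [Nat.sub_self]
    simp [Vpi, ciSup_const]
  have eq1 : Qstar Pt rt H h s (pol h s) = Vstar Pt rt H h s := by
    rw [← hpol h hh s, show H - h = (H - h - 1) + 1 by omega, Vpi]
    unfold Qstar
    congr 1
    refine Finset.sum_congr rfl fun s' _ => ?_
    congr 1
    rcases Nat.lt_or_ge (h+1) H with hh1 | hh1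
    · rw [show H - h - 1 = H - (h+1) by omega]
      exact (hpol (h+1) hh1 s').symm
    · rw [show H - h - 1 = 0 by omega, show h + 1 = H by omega, hVstarH s']
      simp [Vpi]
  intro a'
  rw [eq1, bellman]
  exact le_ciSup_fin (fun a => Qstar Pt rt H h s a) a'
end

section
/- Let (𝒮, 𝒜, P*, r, H) be a finite-horizon MDP with global Q*-gap gap* > 0, and let (P̃, r̃) satisfy, for all (s,a) and all h with 0 ≤ h ≤ H−2, ‖P̃_h(·|s,a) − P*_h(·|s,a)‖₁ ≤ gap*/(2H(H−h−1)) and |r̃_h(s,a) − r_h(s,a)| ≤ gap*/(4H), with r̃_{H−1} = r_{H−1}. Then for every deterministic Markov policy π, every h ∈ {0,…,H−1}, and every (s,a): |Q_h^{π,P̃,r̃}(s,a) − Q_h^{π,P*,r}(s,a)| ≤ (H−1−h)·gap*/(2H). -/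

lemma Vpi_mem {S A : Type*} [Fintype S] (H : ℕ)
    (P : ℕ → S → A → S → ℝ) (r : ℕ → S → A → ℝ) (pol : ℕ → S → A)
    (hP : ∀ h, h + 1 < H → ∀ s a, IsPMF (P h s a))
    (hr : ∀ h, h < H → ∀ s a, r h s a ∈ Set.Icc (0 : ℝ) 1) :
    ∀ t h, h + t ≤ H → ∀ s, Vpi P r pol t h s ∈ Set.Icc (0 : ℝ) t := by
  intro t
  induction t with
  | zero => intro h _ s; simp [Vpi]
  | succ t ih =>
    intro h hht s
    have hhH : h < H := by omega
    obtain ⟨hr0, hr1⟩ := hr h hhH s (pol h s)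
    have hsum : (∑ s' : S, P h s (pol h s) s' * Vpi P r pol t (h + 1) s') ∈
        Set.Icc (0 : ℝ) t := by
      rcases Nat.eq_zero_or_pos t with ht0 | htpos
      · subst ht0; simp [Vpi]
      · have hpmf := hP h (by omega) s (pol h s)
        constructor
        · apply Finset.sum_nonneg
          intro s' _
          exact mul_nonneg (hpmf.1 s') (ih (h + 1) (by omega) s').1
        · calc (∑ s' : S, P h s (pol h s) s' * Vpi P r pol t (h + 1) s')
              ≤ ∑ s' : S, P h s (pol h s) s' * t := by
                apply Finset.sum_le_sum
                intro s' _
                exact mul_le_mul_of_nonneg_left (ih (h + 1) (by omega) s').2 (hpmf.1 s')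
          _ = t := by rw [← Finset.sum_mul, hpmf.2, one_mul]
    constructor
    · simp only [Vpi]; linarith [hsum.1]
    · simp only [Vpi]; push_cast; linarith [hsum.2]

lemma Q_perturbation_aux
    {𝒮 𝒜 : Type*} [Fintype 𝒮] [Fintype 𝒜]
    (H : ℕ)
    (Pstar : ℕ → 𝒮 → 𝒜 → 𝒮 → ℝ) (r : ℕ → 𝒮 → 𝒜 → ℝ)
    (Pt : ℕ → 𝒮 → 𝒜 → 𝒮 → ℝ) (rt : ℕ → 𝒮 → 𝒜 → ℝ)
    (hPstar : ∀ h, h + 1 < H → ∀ s a, IsPMF (Pstar h s a))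
    (hPt : ∀ h, h + 1 < H → ∀ s a, IsPMF (Pt h s a))
    (hr : ∀ h, h < H → ∀ s a, r h s a ∈ Set.Icc (0 : ℝ) 1)
    (hrt : ∀ h, h < H → ∀ s a, rt h s a ∈ Set.Icc (0 : ℝ) 1)
    (gapstar : ℝ) (hgap_pos : 0 < gapstar)
    (hPclose : ∀ h, h + 1 < H → ∀ s a,
      l1dist (Pt h s a) (Pstar h s a) ≤ gapstar / (2 * H * ((H : ℝ) - h - 1)))
    (hrclose : ∀ h, h + 1 < H → ∀ s a,
      |rt h s a - r h s a| ≤ gapstar / (4 * H))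
    (hrlast : ∀ s a, rt (H - 1) s a = r (H - 1) s a)
    (pol : ℕ → 𝒮 → 𝒜) :
    ∀ t h, h + t + 1 = H → ∀ s a,
      |Qpi Pt rt pol H h s a - Qpi Pstar r pol H h s a|
        ≤ (t : ℝ) * gapstar / (2 * H) := by
  intro t
  induction t with
  | zero =>
    intro h hhH s a
    have hlast : h = H - 1 := by omega
    subst hlast
    simp [Qpi, show H - (H - 1 + 1) = 0 by omega, Vpi, hrlast s a]
  | succ t ih =>
    intro h hhH s a
    have hHpos : (0 : ℝ) < H := by
      have : 0 < H := by omega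
      exact_mod_cast this
    have hh1 : h + 1 < H := by omega
    have hsub : H - (h + 1) = t + 1 := by omega
    set Vt : 𝒮 → ℝ := fun s' => Vpi Pt rt pol (t + 1) (h + 1) s' with hVt
    set V : 𝒮 → ℝ := fun s' => Vpi Pstar r pol (t + 1) (h + 1) s' with hV
    set c : ℝ := ((t : ℝ) + 1) / 2 with hc
    have hpt := hPt h hh1 s a
    have hps := hPstar h hh1 s a
    -- value difference at h+1 equals Q difference at h+1
    have hVdiff : ∀ s', |Vt s' - V s'| ≤ (t : ℝ) * gapstar / (2 * H) := by
      intro s'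
      have hsub2 : H - (h + 1 + 1) = t := by omega
      have e1 : Vt s' = Qpi Pt rt pol H (h + 1) s' (pol (h + 1) s') := by
        simp [hVt, Qpi, hsub2, Vpi]
      have e2 : V s' = Qpi Pstar r pol H (h + 1) s' (pol (h + 1) s') := by
        simp [hV, Qpi, hsub2, Vpi]
      rw [e1, e2]
      exact ih (h + 1) (by omega) s' (pol (h + 1) s')
    -- bounds on Vt
    have hVtmem : ∀ s', Vt s' ∈ Set.Icc (0 : ℝ) ((t : ℝ) + 1) := by
      intro s'
      have := Vpi_mem H Pt rt pol hPt hrt (t + 1) (h + 1) (by omega) s'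
      simpa using this
    have hVtc : ∀ s', |Vt s' - c| ≤ c := by
      intro s'
      obtain ⟨h0, h1⟩ := hVtmem s'
      have h2c : 2 * c = (t : ℝ) + 1 := by rw [hc]; ring
      rw [abs_le]; constructor <;> linarith
    -- key decomposition
    have hkey : (∑ s', Pt h s a s' * Vt s') - ∑ s', Pstar h s a s' * V s'
        = (∑ s', (Pt h s a s' - Pstar h s a s') * (Vt s' - c))
          + ∑ s', Pstar h s a s' * (Vt s' - V s') := by
      have e1 : ∑ s', (Pt h s a s' - Pstar h s a s') * (Vt s' - c)
          = (∑ s', Pt h s a s' * Vt s') - (∑ s', Pt h s a s') * c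
            - (∑ s', Pstar h s a s' * Vt s') + (∑ s', Pstar h s a s') * c := by
        simp only [sub_mul, mul_sub, Finset.sum_sub_distrib, Finset.sum_mul]
        ring
      have e2 : ∑ s', Pstar h s a s' * (Vt s' - V s')
          = (∑ s', Pstar h s a s' * Vt s') - ∑ s', Pstar h s a s' * V s' := by
        simp only [mul_sub, Finset.sum_sub_distrib]
      rw [e1, e2, hpt.2, hps.2]
      ring
    -- bound term 1
    have hT1 : |∑ s', (Pt h s a s' - Pstar h s a s') * (Vt s' - c)| ≤ gapstar / (4 * H) := by
      have hHh1 : (H : ℝ) - h - 1 = (t : ℝ) + 1 := by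
        have : (h : ℝ) + (t : ℝ) + 1 + 1 = H := by exact_mod_cast hhH
        linarith
      calc |∑ s', (Pt h s a s' - Pstar h s a s') * (Vt s' - c)|
          ≤ ∑ s', |(Pt h s a s' - Pstar h s a s') * (Vt s' - c)| :=
            Finset.abs_sum_le_sum_abs _ _
        _ ≤ ∑ s', |Pt h s a s' - Pstar h s a s'| * c := by
            apply Finset.sum_le_sum
            intro s' _
            rw [abs_mul]
            exact mul_le_mul_of_nonneg_left (hVtc s') (abs_nonneg _)
        _ = l1dist (Pt h s a) (Pstar h s a) * c := by
            rw [l1dist, Finset.sum_mul]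
        _ ≤ gapstar / (2 * H * ((H : ℝ) - h - 1)) * c := by
            apply mul_le_mul_of_nonneg_right (hPclose h hh1 s a)
            simp only [hc]; positivity
        _ = gapstar / (4 * H) := by
            rw [hHh1, hc]
            have ht1 : (0 : ℝ) < (t : ℝ) + 1 := by positivity
            field_simp
            ring
    -- bound term 2
    have hT2 : |∑ s', Pstar h s a s' * (Vt s' - V s')| ≤ (t : ℝ) * gapstar / (2 * H) := by
      calc |∑ s', Pstar h s a s' * (Vt s' - V s')|
          ≤ ∑ s', |Pstar h s a s' * (Vt s' - V s')| := Finset.abs_sum_le_sum_abs _ _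
        _ ≤ ∑ s', Pstar h s a s' * ((t : ℝ) * gapstar / (2 * H)) := by
            apply Finset.sum_le_sum
            intro s' _
            rw [abs_mul, abs_of_nonneg (hps.1 s')]
            exact mul_le_mul_of_nonneg_left (hVdiff s') (hps.1 s')
        _ = (t : ℝ) * gapstar / (2 * H) := by
            rw [← Finset.sum_mul, hps.2, one_mul]
    -- assemble
    have hrc := hrclose h hh1 s a
    have expand : Qpi Pt rt pol H h s a - Qpi Pstar r pol H h s a
        = (rt h s a - r h s a)
          + ((∑ s', (Pt h s a s' - Pstar h s a s') * (Vt s' - c))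
            + ∑ s', Pstar h s a s' * (Vt s' - V s')) := by
      rw [← hkey]
      simp only [Qpi, hsub, hVt, hV]
      ring
    rw [expand]
    have := abs_add_le (rt h s a - r h s a)
      ((∑ s', (Pt h s a s' - Pstar h s a s') * (Vt s' - c))
        + ∑ s', Pstar h s a s' * (Vt s' - V s'))
    have h2 := abs_add_le (∑ s', (Pt h s a s' - Pstar h s a s') * (Vt s' - c))
      (∑ s', Pstar h s a s' * (Vt s' - V s'))
    have hfinal : gapstar / (4 * H) + (gapstar / (4 * H) + (t : ℝ) * gapstar / (2 * H))
        = ((t : ℝ) + 1) * gapstar / (2 * H) := by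
      field_simp
      ring
    push_cast
    linarith

/-- Q-value perturbation bound, Eq. (upperBoundQFinalTemp) in the paper.
Under the gap-relative closeness conditions, for every deterministic Markov policy the
action-value functions of the perturbed and true MDPs differ by at most
`(H−1−h)·gap*/(2H)`. -/
theorem Q_perturbation_bound
    {𝒮 𝒜 : Type*} [Fintype 𝒮] [Fintype 𝒜] [Nonempty 𝒮] [Nonempty 𝒜]
    (H : ℕ) (hH : 1 ≤ H)
    (Pstar : ℕ → 𝒮 → 𝒜 → 𝒮 → ℝ) (r : ℕ → 𝒮 → 𝒜 → ℝ)
    (Pt : ℕ → 𝒮 → 𝒜 → 𝒮 → ℝ) (rt : ℕ → 𝒮 → 𝒜 → ℝ)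
    (hPstar : ∀ h, h + 1 < H → ∀ s a, IsPMF (Pstar h s a))
    (hPt : ∀ h, h + 1 < H → ∀ s a, IsPMF (Pt h s a))
    (hr : ∀ h, h < H → ∀ s a, r h s a ∈ Set.Icc (0 : ℝ) 1)
    (hrt : ∀ h, h < H → ∀ s a, rt h s a ∈ Set.Icc (0 : ℝ) 1)
    (gapstar : ℝ) (hgap_pos : 0 < gapstar)
    (hgap : ∀ h, h < H → ∀ s a, a ∉ OptActions Pstar r H h s →
      gapstar ≤ (⨆ a', Qstar Pstar r H h s a') - Qstar Pstar r H h s a)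
    (hPclose : ∀ h, h + 1 < H → ∀ s a,
      l1dist (Pt h s a) (Pstar h s a) ≤ gapstar / (2 * H * ((H : ℝ) - h - 1)))
    (hrclose : ∀ h, h + 1 < H → ∀ s a,
      |rt h s a - r h s a| ≤ gapstar / (4 * H))
    (hrlast : ∀ s a, rt (H - 1) s a = r (H - 1) s a) :
    ∀ (pol : ℕ → 𝒮 → 𝒜) (h : ℕ), h < H → ∀ s a,
      |Qpi Pt rt pol H h s a - Qpi Pstar r pol H h s a|
        ≤ ((H : ℝ) - 1 - h) * gapstar / (2 * H) := by
  intro pol h hhH s a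
  have hb := Q_perturbation_aux H Pstar r Pt rt hPstar hPt hr hrt gapstar hgap_pos
    hPclose hrclose hrlast pol (H - 1 - h) h (by omega) s a
  have hcast : ((H - 1 - h : ℕ) : ℝ) = (H : ℝ) - 1 - h := by
    have : h + (H - 1 - h) + 1 = H := by omega
    have := congrArg (fun n : ℕ => (n : ℝ)) this
    push_cast at this
    linarith
  rwa [hcast] at hb
end

section
/- Let (𝒮, 𝒜, P*, r, H) be a finite-horizon MDP. Let P̂_h(·|s,a) be arbitrary probability mass functions on 𝒮 for h ∈ {0,…,H−2} and each (s,a), and let b_h(s,a) ≥ 0 be nonnegative reals satisfying b_h(s,a) ≥ ((H−h−1)/2)·‖P̂_h(·|s,a) − P*_h(·|s,a)‖₁ for all 0 ≤ h ≤ H−2 and all (s,a). Define the truncated optimistic value iteration: V̂_H ≡ 0, Q̂_h(s,a) = min{ r_h(s,a) + ∑_{s'} P̂_h(s'|s,a)·V̂_{h+1}(s') + b_h(s,a), H−h } (the sum absent at h = H−1), and V̂_h(s) = max_{a∈𝒜} Q̂_h(s,a). Then for all h ∈ {0,…,H−1} and all (s,a): Q̂_h(s,a) ≥ Q*_h(s,a)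 and V̂_h(s) ≥ V*_h(s), where Q*, V* are the optimal action-value and value functions of (𝒮,𝒜,P*,r,H). -/
/-- Truncated optimistic value iteration, by backward recursion on the number `t`
of remaining steps; the optimistic value at stage `h` with horizon `H` is
`VhatAux P r b H (H - h) h`. -/
noncomputable def VhatAux {S A : Type*} [Fintype S] [Fintype A] [Nonempty A]
    (P : ℕ → S → A → S → ℝ) (r b : ℕ → S → A → ℝ) (H : ℕ) :
    ℕ → ℕ → S → ℝ
  | 0, _, _ => 0
  | t + 1, h, s =>
      ⨆ a : A,
        min (r h s a + (∑ s' : S, P h s a s' * VhatAux P r b H t (h + 1) s') + b h s a)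
          ((H : ℝ) - h)

/-- Truncated optimistic action-value function
`Q̂_h(s,a) = min{ r_h(s,a) + ∑_{s'} P̂_h(s'|s,a)·V̂_{h+1}(s') + b_h(s,a), H−h }`. -/
noncomputable def Qhat {S A : Type*} [Fintype S] [Fintype A] [Nonempty A]
    (P : ℕ → S → A → S → ℝ) (r b : ℕ → S → A → ℝ) (H h : ℕ) (s : S) (a : A) : ℝ :=
  min (r h s a + (∑ s' : S, P h s a s' * VhatAux P r b H (H - (h + 1)) (h + 1) s') + b h s a)
    ((H : ℝ) - h)

/-- Truncated optimistic value function `V̂_h(s) = max_a Q̂_h(s,a)`. -/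
noncomputable def Vhat {S A : Type*} [Fintype S] [Fintype A] [Nonempty A]
    (P : ℕ → S → A → S → ℝ) (r b : ℕ → S → A → ℝ) (H h : ℕ) (s : S) : ℝ :=
  VhatAux P r b H (H - h) h s

lemma Vpi_bounds {S A : Type*} [Fintype S]
    (P : ℕ → S → A → S → ℝ) (r : ℕ → S → A → ℝ) (H : ℕ)
    (hP : ∀ h, h + 1 < H → ∀ s a, IsPMF (P h s a))
    (hr : ∀ h, h < H → ∀ s a, r h s a ∈ Set.Icc (0 : ℝ) 1) :
    ∀ t h, h + t ≤ H → ∀ (pol : ℕ → S → A) (s : S),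
      Vpi P r pol t h s ∈ Set.Icc (0 : ℝ) t := by
  intro t
  induction t with
  | zero => intro h _ pol s; simp [Vpi]
  | succ t ih =>
    intro h hle pol s
    have hrh := hr h (by omega) s (pol h s)
    simp only [Set.mem_Icc] at hrh
    have hsum : (0:ℝ) ≤ ∑ s' : S, P h s (pol h s) s' * Vpi P r pol t (h+1) s' ∧
        ∑ s' : S, P h s (pol h s) s' * Vpi P r pol t (h+1) s' ≤ t := by
      rcases Nat.eq_zero_or_pos t with rfl | ht
      · simp [Vpi]
      · have hPMF := hP h (by omega) s (pol h s)
        constructor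
        · apply Finset.sum_nonneg
          intro s' _
          exact mul_nonneg (hPMF.1 s') (ih (h+1) (by omega) pol s').1
        · calc ∑ s' : S, P h s (pol h s) s' * Vpi P r pol t (h+1) s'
              ≤ ∑ s' : S, P h s (pol h s) s' * t := by
                refine Finset.sum_le_sum fun s' _ => ?_
                exact mul_le_mul_of_nonneg_left (ih (h+1) (by omega) pol s').2 (hPMF.1 s')
          _ = t := by rw [← Finset.sum_mul, hPMF.2, one_mul]
    simp only [Vpi, Set.mem_Icc]
    push_cast
    constructor <;> linarith [hsum.1, hsum.2]

lemma Vpi_bddAbove {S A : Type*} [Fintype S]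
    (P : ℕ → S → A → S → ℝ) (r : ℕ → S → A → ℝ) (H : ℕ)
    (hP : ∀ h, h + 1 < H → ∀ s a, IsPMF (P h s a))
    (hr : ∀ h, h < H → ∀ s a, r h s a ∈ Set.Icc (0 : ℝ) 1)
    (h : ℕ) (s : S) :
    BddAbove (Set.range fun pol : ℕ → S → A => Vpi P r pol (H - h) h s) := by
  refine ⟨((H - h : ℕ) : ℝ), ?_⟩
  rintro x ⟨pol, rfl⟩
  rcases le_or_gt h H with hh | hh
  · exact (Vpi_bounds P r H hP hr (H - h) h (by omega) pol s).2
  · have : H - h = 0 := by omega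
    rw [this]; simp [Vpi]

lemma Vstar_bounds {S A : Type*} [Fintype S] [Nonempty A]
    (P : ℕ → S → A → S → ℝ) (r : ℕ → S → A → ℝ) (H : ℕ)
    (hP : ∀ h, h + 1 < H → ∀ s a, IsPMF (P h s a))
    (hr : ∀ h, h < H → ∀ s a, r h s a ∈ Set.Icc (0 : ℝ) 1)
    (h : ℕ) (hh : h ≤ H) (s : S) :
    Vstar P r H h s ∈ Set.Icc (0 : ℝ) ((H - h : ℕ) : ℝ) := by
  have hbdd := Vpi_bddAbove P r H hP hr h s
  constructor
  · exact le_trans (Vpi_bounds P r H hP hr (H - h) h (by omega) (Classical.arbitrary _) s).1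
      (le_ciSup hbdd _)
  · exact ciSup_le fun pol => (Vpi_bounds P r H hP hr (H - h) h (by omega) pol s).2

lemma Vstar_at_H {S A : Type*} [Fintype S] [Nonempty A]
    (P : ℕ → S → A → S → ℝ) (r : ℕ → S → A → ℝ) (H : ℕ) (s : S) :
    Vstar P r H H s = 0 := by
  simp [Vstar, Nat.sub_self, Vpi, ciSup_const]

lemma sum_shift_bound {S : Type*} [Fintype S] [Nonempty S] (p q v : S → ℝ) (M : ℝ)
    (hp : IsPMF p) (hq : IsPMF q) (hv : ∀ s, v s ∈ Set.Icc (0:ℝ) M) :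
    ∑ s, p s * v s ≤ ∑ s, q s * v s + M / 2 * l1dist q p := by
  have h0 : ∑ s, (p s - q s) * (M / 2) = 0 := by
    rw [← Finset.sum_mul, Finset.sum_sub_distrib, hp.2, hq.2]
    ring
  have key : ∑ s, (p s - q s) * v s = ∑ s, (p s - q s) * (v s - M / 2) := by
    simp only [mul_sub]
    rw [Finset.sum_sub_distrib, h0, sub_zero]
  have hbnd : ∑ s, (p s - q s) * (v s - M / 2) ≤ M / 2 * l1dist q p := by
    calc ∑ s, (p s - q s) * (v s - M / 2) ≤ ∑ s, |p s - q s| * (M / 2) := by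
          refine Finset.sum_le_sum fun s _ => ?_
          calc (p s - q s) * (v s - M / 2) ≤ |(p s - q s) * (v s - M / 2)| := le_abs_self _
          _ = |p s - q s| * |v s - M / 2| := abs_mul _ _
          _ ≤ |p s - q s| * (M / 2) := by
              refine mul_le_mul_of_nonneg_left ?_ (abs_nonneg _)
              rw [abs_le]
              have h1 := (hv s).1; have h2 := (hv s).2
              constructor <;> linarith
    _ = M / 2 * l1dist q p := by
        rw [l1dist, Finset.mul_sum]
        refine Finset.sum_congr rfl fun s _ => ?_
        rw [abs_sub_comm (q s) (p s)]; ring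
  have hdiff : ∑ s, p s * v s - ∑ s, q s * v s = ∑ s, (p s - q s) * v s := by
    rw [← Finset.sum_sub_distrib]
    exact Finset.sum_congr rfl fun s _ => by ring
  rw [← key] at hbnd
  linarith

/-- optimism of truncated UCB value iteration.
If the bonuses dominate half the span times the ℓ₁ model error, then the truncated
optimistic value iteration upper-bounds the optimal values of the true MDP. -/
theorem optimism_of_truncated_value_iteration
    {𝒮 𝒜 : Type*} [Fintype 𝒮] [Fintype 𝒜] [Nonempty 𝒮] [Nonempty 𝒜]
    (H : ℕ) (hH : 1 ≤ H)
    (Pstar : ℕ → 𝒮 → 𝒜 → 𝒮 → ℝ) (r : ℕ → 𝒮 → 𝒜 → ℝ)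
    (Phat : ℕ → 𝒮 → 𝒜 → 𝒮 → ℝ) (b : ℕ → 𝒮 → 𝒜 → ℝ)
    (hPstar : ∀ h, h + 1 < H → ∀ s a, IsPMF (Pstar h s a))
    (hPhat : ∀ h, h + 1 < H → ∀ s a, IsPMF (Phat h s a))
    (hr : ∀ h, h < H → ∀ s a, r h s a ∈ Set.Icc (0 : ℝ) 1)
    (hb0 : ∀ h, h < H → ∀ s a, 0 ≤ b h s a)
    (hb : ∀ h, h + 1 < H → ∀ s a,
      ((H : ℝ) - h - 1) / 2 * l1dist (Phat h s a) (Pstar h s a) ≤ b h s a) :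
    ∀ h, h < H → ∀ s a,
      Qstar Pstar r H h s a ≤ Qhat Phat r b H h s a ∧
      Vstar Pstar r H h s ≤ Vhat Phat r b H h s := by

  -- main proof
  have hQ : ∀ h, h < H → ∀ s a, Qstar Pstar r H h s a ≤ Qhat Phat r b H h s a → True := fun _ _ _ _ _ => trivial
  clear hQ
  suffices key : ∀ t h, h < H → H - h = t → ∀ (s : 𝒮) (a : 𝒜),
      Qstar Pstar r H h s a ≤ Qhat Phat r b H h s a ∧
      Vstar Pstar r H h s ≤ Vhat Phat r b H h s by
    intro h hh s a
    exact key (H - h) h hh rfl s a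
  intro t
  induction t with
  | zero => intro h hh ht; omega
  | succ t ih =>
    intro h hh ht s a₀
    have ht' : H - (h + 1) = t := by omega
    -- V̂ at h+1 dominates V* at h+1
    have hVV : ∀ s', Vstar Pstar r H (h+1) s' ≤ VhatAux Phat r b H (H - (h+1)) (h+1) s' := by
      intro s'
      rcases Nat.lt_or_ge (h+1) H with h1 | h1
      · exact (ih (h+1) h1 ht' s' (Classical.arbitrary 𝒜)).2
      · have hEq : h + 1 = H := by omega
        rw [hEq, Vstar_at_H, Nat.sub_self]
        simp [VhatAux]
    have hVstarBnd : ∀ s', Vstar Pstar r H (h+1) s' ∈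
        Set.Icc (0:ℝ) ((H : ℝ) - h - 1) := by
      intro s'
      have := Vstar_bounds Pstar r H hPstar hr (h+1) (by omega) s'
      have hc : ((H - (h+1) : ℕ) : ℝ) = (H : ℝ) - h - 1 := by
        have : h + 1 ≤ H := by omega
        push_cast [Nat.cast_sub this]
        ring
      rw [hc] at this
      exact this
    -- Q part, for all actions
    have hQ : ∀ a, Qstar Pstar r H h s a ≤ Qhat Phat r b H h s a := by
      intro a
      have hra := hr h hh s a
      simp only [Set.mem_Icc] at hra
      rw [Qstar, Qhat]
      apply le_min
      · -- ≤ r + ∑ Phat V̂ + b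
        rcases Nat.lt_or_ge (h+1) H with h1 | h1
        · have hshift := sum_shift_bound (Pstar h s a) (Phat h s a)
            (fun s' => Vstar Pstar r H (h+1) s') ((H:ℝ) - h - 1)
            (hPstar h h1 s a) (hPhat h h1 s a) hVstarBnd
          have hmono : ∑ s', Phat h s a s' * Vstar Pstar r H (h+1) s' ≤
              ∑ s', Phat h s a s' * VhatAux Phat r b H (H - (h+1)) (h+1) s' := by
            refine Finset.sum_le_sum fun s' _ => ?_
            exact mul_le_mul_of_nonneg_left (hVV s') ((hPhat h h1 s a).1 s')
          have hbb := hb h h1 s a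
          linarith
        · have hEq : h + 1 = H := by omega
          have hz1 : ∑ s', Pstar h s a s' * Vstar Pstar r H (h+1) s' = 0 := by
            rw [hEq]; simp [Vstar_at_H]
          have hz2 : ∑ s', Phat h s a s' * VhatAux Phat r b H (H - (h+1)) (h+1) s' = 0 := by
            rw [hEq, Nat.sub_self]; simp [VhatAux]
          have := hb0 h hh s a
          rw [hz1, hz2]
          linarith
      · -- ≤ H - h
        rcases Nat.lt_or_ge (h+1) H with h1 | h1
        · have hPMF := hPstar h h1 s a
          have hsum : ∑ s', Pstar h s a s' * Vstar Pstar r H (h+1) s' ≤ (H:ℝ) - h - 1 := by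
            calc ∑ s', Pstar h s a s' * Vstar Pstar r H (h+1) s'
                ≤ ∑ s', Pstar h s a s' * ((H:ℝ) - h - 1) := by
                  refine Finset.sum_le_sum fun s' _ => ?_
                  exact mul_le_mul_of_nonneg_left (hVstarBnd s').2 (hPMF.1 s')
            _ = (H:ℝ) - h - 1 := by rw [← Finset.sum_mul, hPMF.2, one_mul]
          linarith
        · have hEq : h + 1 = H := by omega
          have hz1 : ∑ s', Pstar h s a s' * Vstar Pstar r H (h+1) s' = 0 := by
            rw [hEq]; simp [Vstar_at_H]
          rw [hz1]
          have : (H:ℝ) - h = 1 := by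
            rw [← hEq]; push_cast; ring
          linarith
    refine ⟨hQ a₀, ?_⟩
    -- V part
    have hVhat : Vhat Phat r b H h s = ⨆ a : 𝒜, Qhat Phat r b H h s a := by
      rw [Vhat, ht, VhatAux]
      rw [← ht']
      rfl
    rw [hVhat, Vstar]
    refine ciSup_le fun pol => ?_
    have hstep : Vpi Pstar r pol (H - h) h s ≤ Qstar Pstar r H h s (pol h s) := by
      rw [ht, Vpi, Qstar]
      have hsum : ∑ s', Pstar h s (pol h s) s' * Vpi Pstar r pol t (h+1) s' ≤
          ∑ s', Pstar h s (pol h s) s' * Vstar Pstar r H (h+1) s' := by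
        rcases Nat.eq_zero_or_pos t with rfl | htpos
        · have hEq : h + 1 = H := by omega
          simp only [Vpi, mul_zero, Finset.sum_const_zero]
          rw [hEq]
          simp [Vstar_at_H]
        · have h1 : h + 1 < H := by omega
          refine Finset.sum_le_sum fun s' _ => ?_
          refine mul_le_mul_of_nonneg_left ?_ ((hPstar h h1 s (pol h s)).1 s')
          have : Vpi Pstar r pol (H - (h+1)) (h+1) s' ≤ Vstar Pstar r H (h+1) s' :=
            le_ciSup (Vpi_bddAbove Pstar r H hPstar hr (h+1) s') pol
          rwa [ht'] at this
      linarith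
    calc Vpi Pstar r pol (H - h) h s ≤ Qhat Phat r b H h s (pol h s) :=
          le_trans hstep (hQ (pol h s))
    _ ≤ ⨆ a : 𝒜, Qhat Phat r b H h s a :=
          le_ciSup (Set.Finite.bddAbove (Set.finite_range _)) _
end

section
/- Let (𝒮, 𝒜, P*, r, H) be a finite-horizon MDP, let P̂_h(·|s,a) be probability mass functions on 𝒮 for h ∈ {0,…,H−2}, and let b_h(s,a) ≥ 0 satisfy b_h(s,a) ≥ ((H−h−1)/2)·‖P̂_h(·|s,a) − P*_h(·|s,a)‖₁ for all 0 ≤ h ≤ H−2 and all (s,a). Let Q̂, V̂ be the truncated optimistic value iteration: V̂_H ≡ 0, Q̂_h(s,a) = min{ r_h(s,a) + ∑_{s'} P̂_h(s'|s,a)·V̂_{h+1}(s') + b_h(s,a), H−h }, V̂_h(s) = max_a Q̂_h(s,a), and let π be any greedy policy, i.e., π_h(s) ∈ argmax_a Q̂_h(s,a) for all (s,h). Then for every h ∈ {0,…,H−2} and every state s, writing a = π_h(s): V̂_h(s) − V_h^{π,P*,r}(s) ≤ 2·b_h(s,a) + ∑_{s'} P*_h(s'|s,a)·( V̂_{h+1}(s')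 − V_{h+1}^{π,P*,r}(s') ). -/
lemma vhatAux_nonneg {S A : Type*} [Fintype S] [Fintype A] [Nonempty A]
    (P : ℕ → S → A → S → ℝ) (r b : ℕ → S → A → ℝ) (H : ℕ)
    (hP : ∀ h, h + 1 < H → ∀ s a s', 0 ≤ P h s a s')
    (hr : ∀ h, h < H → ∀ s a, 0 ≤ r h s a)
    (hb : ∀ h, h < H → ∀ s a, 0 ≤ b h s a) :
    ∀ t h, h + t ≤ H → ∀ s, 0 ≤ VhatAux P r b H t h s := by
  intro t
  induction t with
  | zero => intro h _ s; simp [VhatAux]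
  | succ t ih =>
    intro h hht s
    rw [VhatAux]
    have hhH : h < H := by omega
    obtain ⟨a⟩ := ‹Nonempty A›
    refine le_ciSup_of_le (Set.Finite.bddAbove (Set.finite_range _)) a (le_min ?_ ?_)
    · refine add_nonneg (add_nonneg (hr h hhH s a) (Finset.sum_nonneg fun s' _ => ?_))
        (hb h hhH s a)
      cases t with
      | zero => simp [VhatAux]
      | succ t' =>
        exact mul_nonneg (hP h (by omega) s a s') (ih (h + 1) (by omega) s')
    · have : (h : ℝ) ≤ (H : ℝ) := by exact_mod_cast hhH.le
      linarith

lemma vhatAux_le {S A : Type*} [Fintype S] [Fintype A] [Nonempty A]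
    (P : ℕ → S → A → S → ℝ) (r b : ℕ → S → A → ℝ) (H : ℕ)
    (t h : ℕ) (hh : h ≤ H) (s : S) :
    VhatAux P r b H t h s ≤ (H : ℝ) - h := by
  cases t with
  | zero =>
    have : (h : ℝ) ≤ (H : ℝ) := by exact_mod_cast hh
    simp [VhatAux]; linarith
  | succ t =>
    rw [VhatAux]
    exact ciSup_le fun a => min_le_right _ _

/-- one-step regret decomposition for the greedy policy.
For a greedy policy with respect to the truncated optimistic values, the gap between
the optimistic value and the true value of the greedy policy at stage `h` is at most
twice the bonus plus the expected gap at stage `h+1`. -/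
theorem one_step_regret_decomposition
    {𝒮 𝒜 : Type*} [Fintype 𝒮] [Fintype 𝒜] [Nonempty 𝒮] [Nonempty 𝒜]
    (H : ℕ) (hH : 1 ≤ H)
    (Pstar : ℕ → 𝒮 → 𝒜 → 𝒮 → ℝ) (r : ℕ → 𝒮 → 𝒜 → ℝ)
    (Phat : ℕ → 𝒮 → 𝒜 → 𝒮 → ℝ) (b : ℕ → 𝒮 → 𝒜 → ℝ)
    (hPstar : ∀ h, h + 1 < H → ∀ s a, IsPMF (Pstar h s a))
    (hPhat : ∀ h, h + 1 < H → ∀ s a, IsPMF (Phat h s a))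
    (hr : ∀ h, h < H → ∀ s a, r h s a ∈ Set.Icc (0 : ℝ) 1)
    (hb0 : ∀ h, h < H → ∀ s a, 0 ≤ b h s a)
    (hb : ∀ h, h + 1 < H → ∀ s a,
      ((H : ℝ) - h - 1) / 2 * l1dist (Phat h s a) (Pstar h s a) ≤ b h s a)
    (pol : ℕ → 𝒮 → 𝒜)
    (hgreedy : ∀ h, h < H → ∀ s a,
      Qhat Phat r b H h s a ≤ Qhat Phat r b H h s (pol h s)) :
    ∀ h, h + 1 < H → ∀ s,
      Vhat Phat r b H h s - Vpi Pstar r pol (H - h) h s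
        ≤ 2 * b h s (pol h s) +
          ∑ s', Pstar h s (pol h s) s' *
            (Vhat Phat r b H (h + 1) s' - Vpi Pstar r pol (H - (h + 1)) (h + 1) s') := by
  intro h hhH s
  set a := pol h s with ha
  set V' : 𝒮 → ℝ := fun s' => Vhat Phat r b H (h + 1) s' with hV'
  set W : 𝒮 → ℝ := fun s' => Vpi Pstar r pol (H - (h + 1)) (h + 1) s' with hW
  have hts : H - h = (H - (h + 1)) + 1 := by omega
  have hQ : Vhat Phat r b H h s ≤ Qhat Phat r b H h s a := by
    rw [Vhat, hts, VhatAux]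
    exact ciSup_le fun a' => hgreedy h (by omega) s a'
  have hQ2 : Qhat Phat r b H h s a
      ≤ r h s a + (∑ s', Phat h s a s' * V' s') + b h s a := min_le_left _ _
  have hVeq : Vpi Pstar r pol (H - h) h s = r h s a + ∑ s', Pstar h s a s' * W s' := by
    rw [hts, Vpi]
  set c : ℝ := ((H : ℝ) - h - 1) / 2 with hc
  have hVb : ∀ s', |V' s' - c| ≤ c := by
    intro s'
    have h0 := vhatAux_nonneg Phat r b H (fun h hh s a => (hPhat h hh s a).1)
      (fun h hh s a => (hr h hh s a).1) hb0 (H - (h + 1)) (h + 1) (by omega) s'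
    have h1 := vhatAux_le Phat r b H (H - (h + 1)) (h + 1) (by omega) s'
    have hcast : ((h + 1 : ℕ) : ℝ) = (h : ℝ) + 1 := by push_cast; ring
    rw [hcast] at h1
    rw [abs_le]
    constructor <;> simp only [hV', Vhat, hc] <;> linarith
  have hsum0 : ∑ s', (Phat h s a s' - Pstar h s a s') * c = 0 := by
    rw [← Finset.sum_mul, Finset.sum_sub_distrib, (hPhat h hhH s a).2, (hPstar h hhH s a).2]
    ring
  have hkey : ∑ s', (Phat h s a s' - Pstar h s a s') * V' s' ≤ b h s a := by
    have h1 : ∑ s', (Phat h s a s' - Pstar h s a s') * V' s'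
        = ∑ s', (Phat h s a s' - Pstar h s a s') * (V' s' - c) := by
      simp only [mul_sub, Finset.sum_sub_distrib, hsum0, sub_zero]
    have h2 : ∑ s', (Phat h s a s' - Pstar h s a s') * (V' s' - c)
        ≤ ∑ s', |Phat h s a s' - Pstar h s a s'| * c := by
      refine Finset.sum_le_sum fun s' _ => (le_abs_self _).trans ?_
      rw [abs_mul]
      exact mul_le_mul_of_nonneg_left (hVb s') (abs_nonneg _)
    have h3 : ∑ s', |Phat h s a s' - Pstar h s a s'| * c
        = c * l1dist (Phat h s a) (Pstar h s a) := by
      rw [l1dist, ← Finset.sum_mul, mul_comm]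
    calc ∑ s', (Phat h s a s' - Pstar h s a s') * V' s'
        ≤ c * l1dist (Phat h s a) (Pstar h s a) := by rw [h1, ← h3]; exact h2
      _ ≤ b h s a := hb h hhH s a
  have e1 : ∑ s', (Phat h s a s' - Pstar h s a s') * V' s'
      = (∑ s', Phat h s a s' * V' s') - ∑ s', Pstar h s a s' * V' s' := by
    simp [sub_mul, Finset.sum_sub_distrib]
  have e2 : ∑ s', Pstar h s a s' * (V' s' - W s')
      = (∑ s', Pstar h s a s' * V' s') - ∑ s', Pstar h s a s' * W s' := by
    simp [mul_sub, Finset.sum_sub_distrib]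
  have hmain := hQ.trans hQ2
  show Vhat Phat r b H h s - Vpi Pstar r pol (H - h) h s
      ≤ 2 * b h s a + ∑ s', Pstar h s a s' * (V' s' - W s')
  linarith
end

section
/- Let (𝒮, 𝒜, P*, r, H) be a finite-horizon MDP with global Q*-gap gap* > 0, let S = |𝒮|, let μ > 0, α ∈ [0,1], and K ≥ 1 be given, and set C = 0.5·S·ln 2 + μ·K^α. For each 0 ≤ h ≤ H−2 and (s,a), let n_h(s,a) ≥ 1 be an integer and P̂_h(·|s,a) a probability mass function on 𝒮 such that: (i) ‖P̂_h(·|s,a) − P*_h(·|s,a)‖₁ ≤ 2·√(C/n_h(s,a)), and (ii) n_h(s,a) > n̄_h := (2·S·ln 2 + 4·μ·K^α)·(2H(H−h−1))²/(gap*)². Define bonuses b_h(s,a) = (H−h−1)·√(C/n_h(s,a)) for 0 ≤ h ≤ H−2 and b_{H−1}(s,a) = 0. Then every deterministic Markov policy that is optimal for the MDP (𝒮, 𝒜, P̂, r + b, H) satisfies π_h(s) ∈ A*_h(s) for all (s,h), i.e., it is optimal for (P*, r). -/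
section Aux
set_option linter.unusedSectionVars false

variable {S A : Type*} [Fintype S] [Fintype A] [Nonempty S] [Nonempty A]

lemma aux_bdd (f : A → ℝ) : BddAbove (Set.range f) :=
  Set.Finite.bddAbove (Set.finite_range f)

lemma l1dist_comm (p q : S → ℝ) : l1dist p q = l1dist q p := by
  unfold l1dist
  exact Finset.sum_congr rfl fun s _ => abs_sub_comm _ _

lemma centered_l1 (p q V : S → ℝ) (hp : IsPMF p) (hq : IsPMF q) {M : ℝ}
    (hV0 : ∀ s, 0 ≤ V s) (hVM : ∀ s, V s ≤ M) :
    |∑ s, p s * V s - ∑ s, q s * V s| ≤ M / 2 * l1dist p q := by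
  have key : ∑ s, (p s - q s) * (V s - M / 2)
      = ∑ s, p s * V s - ∑ s, q s * V s := by
    calc ∑ s, (p s - q s) * (V s - M / 2)
        = ∑ s, ((p s * V s - q s * V s) - M / 2 * (p s - q s)) :=
          Finset.sum_congr rfl fun s _ => by ring
      _ = (∑ s, (p s * V s - q s * V s)) - M / 2 * ∑ s, (p s - q s) := by
          rw [Finset.sum_sub_distrib, Finset.mul_sum]
      _ = (∑ s, p s * V s - ∑ s, q s * V s)
          - M / 2 * ((∑ s, p s) - (∑ s, q s)) := by
          rw [Finset.sum_sub_distrib, Finset.sum_sub_distrib]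
      _ = ∑ s, p s * V s - ∑ s, q s * V s := by rw [hp.2, hq.2]; ring
  rw [← key, l1dist, Finset.mul_sum]
  refine (Finset.abs_sum_le_sum_abs _ _).trans (Finset.sum_le_sum ?_)
  intro s _
  rw [abs_mul]
  have h1 : |V s - M / 2| ≤ M / 2 :=
    abs_le.mpr ⟨by linarith [hV0 s], by linarith [hVM s]⟩
  calc |p s - q s| * |V s - M / 2| ≤ |p s - q s| * (M / 2) :=
        mul_le_mul_of_nonneg_left h1 (abs_nonneg _)
    _ = M / 2 * |p s - q s| := mul_comm _ _

noncomputable def Vopt (P : ℕ → S → A → S → ℝ) (r : ℕ → S → A → ℝ) :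
    ℕ → ℕ → S → ℝ
  | 0, _, _ => 0
  | t + 1, h, s =>
      ⨆ a : A, (r h s a + ∑ s' : S, P h s a s' * Vopt P r t (h + 1) s')

variable {H : ℕ} {P : ℕ → S → A → S → ℝ} {r : ℕ → S → A → ℝ} {R : ℝ}

lemma vopt_bounds (hP : ∀ h, h + 1 < H → ∀ s a, IsPMF (P h s a))
    (hr0 : ∀ h, h < H → ∀ s a, 0 ≤ r h s a)
    (hrR : ∀ h, h < H → ∀ s a, r h s a ≤ R) :
    ∀ t h, h + t ≤ H → ∀ s, 0 ≤ Vopt P r t h s ∧ Vopt P r t h s ≤ t * R := by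
  intro t
  induction t with
  | zero => intro h _ s; simp [Vopt]
  | succ t ih =>
    intro h hle s
    have hhH : h < H := by omega
    have hsum : ∀ a, 0 ≤ ∑ s' : S, P h s a s' * Vopt P r t (h + 1) s' ∧
        ∑ s' : S, P h s a s' * Vopt P r t (h + 1) s' ≤ t * R := by
      intro a
      match t with
      | 0 => simp [Vopt]
      | t + 1 =>
        have hP' := hP h (by omega) s a
        constructor
        · refine Finset.sum_nonneg fun s' _ => mul_nonneg (hP'.1 s') ?_
          exact (ih (h + 1) (by omega) s').1
        · calc ∑ s' : S, P h s a s' * Vopt P r (t+1) (h + 1) s'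
              ≤ ∑ s' : S, P h s a s' * ((t+1 : ℕ) * R) := by
                refine Finset.sum_le_sum fun s' _ => ?_
                exact mul_le_mul_of_nonneg_left ((ih (h + 1) (by omega) s').2) (hP'.1 s')
            _ = (t+1 : ℕ) * R := by rw [← Finset.sum_mul, hP'.2, one_mul]
    constructor
    · obtain ⟨a⟩ := ‹Nonempty A›
      refine le_trans ?_ (le_ciSup (aux_bdd _) a)
      have := hr0 h hhH s a
      have := (hsum a).1
      linarith
    · refine ciSup_le fun a => ?_
      have := hrR h hhH s a
      have := (hsum a).2
      push_cast
      push_cast at this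
      linarith

lemma vpi_nonneg (hP : ∀ h, h + 1 < H → ∀ s a, IsPMF (P h s a))
    (hr0 : ∀ h, h < H → ∀ s a, 0 ≤ r h s a) :
    ∀ t h, h + t ≤ H → ∀ pol s, 0 ≤ Vpi P r pol t h s := by
  intro t
  induction t with
  | zero => intro h _ pol s; simp [Vpi]
  | succ t ih =>
    intro h hle pol s
    have hr' := hr0 h (by omega) s (pol h s)
    have hsum : 0 ≤ ∑ s' : S, P h s (pol h s) s' * Vpi P r pol t (h + 1) s' := by
      match t with
      | 0 => simp [Vpi]
      | t + 1 =>
        refine Finset.sum_nonneg fun s' _ => mul_nonneg ((hP h (by omega) s (pol h s)).1 s') ?_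
        exact ih (h + 1) (by omega) pol s'
    show 0 ≤ r h s (pol h s) + ∑ s' : S, P h s (pol h s) s' * Vpi P r pol t (h + 1) s'
    linarith

lemma vpi_le_vopt (hP : ∀ h, h + 1 < H → ∀ s a, IsPMF (P h s a)) :
    ∀ t h, h + t ≤ H → ∀ pol s, Vpi P r pol t h s ≤ Vopt P r t h s := by
  intro t
  induction t with
  | zero => intro h _ pol s; simp [Vpi, Vopt]
  | succ t ih =>
    intro h hle pol s
    have step : Vpi P r pol (t + 1) h s
        ≤ r h s (pol h s) + ∑ s' : S, P h s (pol h s) s' * Vopt P r t (h + 1) s' := by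
      show r h s (pol h s) + ∑ s' : S, P h s (pol h s) s' * Vpi P r pol t (h + 1) s' ≤ _
      match t with
      | 0 => simp [Vpi, Vopt]
      | t + 1 =>
        have hP' := hP h (by omega) s (pol h s)
        have : ∑ s' : S, P h s (pol h s) s' * Vpi P r pol (t+1) (h + 1) s'
            ≤ ∑ s' : S, P h s (pol h s) s' * Vopt P r (t+1) (h + 1) s' :=
          Finset.sum_le_sum fun s' _ =>
            mul_le_mul_of_nonneg_left (ih (h + 1) (by omega) pol s') (hP'.1 s')
        linarith
    refine step.trans ?_
    simp only [Vopt]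
    exact le_ciSup (f := fun a : A => r h s a + ∑ s' : S, P h s a s' * Vopt P r t (h + 1) s')
      (aux_bdd _) (pol h s)

lemma exists_opt_pol :
    ∃ pol : ℕ → S → A, ∀ t h, h + t = H → ∀ s,
      Vpi P r pol t h s = Vopt P r t h s := by
  classical
  choose polf hpolf using fun (h : ℕ) (s : S) =>
    Finite.exists_max (fun a : A =>
      r h s a + ∑ s' : S, P h s a s' * Vopt P r (H - (h + 1)) (h + 1) s')
  refine ⟨polf, ?_⟩
  intro t
  induction t with
  | zero => intro h _ s; simp [Vpi, Vopt]
  | succ t ih =>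
    intro h hh s
    have h2 : H - (h + 1) = t := by omega
    show r h s (polf h s) + ∑ s' : S, P h s (polf h s) s' * Vpi P r polf t (h + 1) s'
        = Vopt P r (t + 1) h s
    have e : ∀ s' ∈ Finset.univ, P h s (polf h s) s' * Vpi P r polf t (h + 1) s'
        = P h s (polf h s) s' * Vopt P r t (h + 1) s' := fun s' _ => by
      rw [ih (h + 1) (by omega) s']
    rw [Finset.sum_congr rfl e]
    have hmax := hpolf h s
    rw [h2] at hmax
    simp only [Vopt]
    refine le_antisymm ?_ (ciSup_le hmax)
    exact le_ciSup (f := fun a : A => r h s a + ∑ s' : S, P h s a s' * Vopt P r t (h + 1) s')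
      (aux_bdd _) (polf h s)

lemma vstar_eq_vopt (hP : ∀ h, h + 1 < H → ∀ s a, IsPMF (P h s a))
    {h : ℕ} (hh : h ≤ H) (s : S) :
    Vstar P r H h s = Vopt P r (H - h) h s := by
  obtain ⟨pol, hpol⟩ := exists_opt_pol (P := P) (r := r) (H := H)
  have hb : BddAbove (Set.range fun pol : ℕ → S → A => Vpi P r pol (H - h) h s) := by
    refine ⟨Vopt P r (H - h) h s, ?_⟩
    rintro x ⟨pol', rfl⟩
    exact vpi_le_vopt hP (H - h) h (by omega) pol' s
  refine le_antisymm (ciSup_le fun pol' => vpi_le_vopt hP (H - h) h (by omega) pol' s) ?_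
  rw [← hpol (H - h) h (by omega) s]
  exact le_ciSup hb pol

lemma vstar_horizon (s : S) : Vstar P r H H s = 0 := by
  unfold Vstar
  simp [Vpi, ciSup_const]

lemma vstar_bellman (hP : ∀ h, h + 1 < H → ∀ s a, IsPMF (P h s a))
    {h : ℕ} (hh : h < H) (s : S) :
    Vstar P r H h s = ⨆ a : A, Qstar P r H h s a := by
  have e2 : H - h = (H - (h + 1)) + 1 := by omega
  rw [vstar_eq_vopt hP (le_of_lt hh) s, e2]
  simp only [Vopt]
  refine iSup_congr fun a => ?_
  unfold Qstar
  congr 1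
  refine Finset.sum_congr rfl fun s' _ => ?_
  rw [vstar_eq_vopt hP (by omega) s']

lemma qstar_le_vstar (hP : ∀ h, h + 1 < H → ∀ s a, IsPMF (P h s a))
    {h : ℕ} (hh : h < H) (s : S) (a : A) :
    Qstar P r H h s a ≤ Vstar P r H h s := by
  rw [vstar_bellman hP hh s]
  exact le_ciSup (aux_bdd _) a

lemma qstar_bounds (hP : ∀ h, h + 1 < H → ∀ s a, IsPMF (P h s a))
    (hr0 : ∀ h, h < H → ∀ s a, 0 ≤ r h s a)
    (hrR : ∀ h, h < H → ∀ s a, r h s a ≤ R) (hR : 0 ≤ R)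
    {h : ℕ} (hh : h < H) (s : S) (a : A) :
    0 ≤ Qstar P r H h s a ∧ Qstar P r H h s a ≤ ((H : ℝ) - h) * R := by
  have hr0' := hr0 h hh s a
  have hrR' := hrR h hh s a
  unfold Qstar
  rcases Nat.lt_or_ge (h + 1) H with hcase | hcase
  · have hP' := hP h hcase s a
    have hbnds : ∀ s', 0 ≤ Vstar P r H (h + 1) s' ∧
        Vstar P r H (h + 1) s' ≤ ((H : ℕ) - (h + 1) : ℕ) * R := fun s' => by
      rw [vstar_eq_vopt hP (by omega) s']
      exact vopt_bounds hP hr0 hrR (H - (h + 1)) (h + 1) (by omega) s'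
    have hcast : (((H : ℕ) - (h + 1) : ℕ) : ℝ) = (H : ℝ) - h - 1 := by
      push_cast [Nat.cast_sub (by omega : h + 1 ≤ H)]; ring
    constructor
    · have : 0 ≤ ∑ s' : S, P h s a s' * Vstar P r H (h + 1) s' :=
        Finset.sum_nonneg fun s' _ => mul_nonneg (hP'.1 s') (hbnds s').1
      linarith
    · have : ∑ s' : S, P h s a s' * Vstar P r H (h + 1) s'
          ≤ ∑ s' : S, P h s a s' * (((H : ℝ) - h - 1) * R) := by
        refine Finset.sum_le_sum fun s' _ => ?_
        refine mul_le_mul_of_nonneg_left ?_ (hP'.1 s')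
        rw [← hcast]; exact (hbnds s').2
      rw [← Finset.sum_mul, hP'.2, one_mul] at this
      have hHh : (1 : ℝ) ≤ (H : ℝ) - h := by
        have : (h : ℝ) + 1 ≤ (H : ℝ) := by exact_mod_cast hh
        linarith
      nlinarith
  · have hH1 : h + 1 = H := by omega
    have : ∀ s' ∈ Finset.univ, P h s a s' * Vstar P r H (h + 1) s' = 0 := fun s' _ => by
      rw [hH1, vstar_horizon, mul_zero]
    rw [Finset.sum_congr rfl this]
    simp only [Finset.sum_const_zero, add_zero]
    have hHh : (1 : ℝ) ≤ (H : ℝ) - h := by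
      have : (h : ℝ) + 1 ≤ (H : ℝ) := by exact_mod_cast hh
      linarith
    exact ⟨hr0', by nlinarith⟩

end Aux

set_option maxHeartbeats 2000000

/-- on the good event, sufficiently-visited UCBVI is optimal.
If every visitation count exceeds the threshold `n̄_h` and the empirical kernel is
within the concentration radius of the truth, then every policy optimal for the
bonus-perturbed empirical MDP `(P̂, r + b)` is optimal for the true MDP `(P*, r)`. -/
theorem ucbvi_policy_optimal_of_large_counts
    {𝒮 𝒜 : Type*} [Fintype 𝒮] [Fintype 𝒜] [Nonempty 𝒮] [Nonempty 𝒜]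
    (H : ℕ) (hH : 1 ≤ H)
    (Pstar : ℕ → 𝒮 → 𝒜 → 𝒮 → ℝ) (r : ℕ → 𝒮 → 𝒜 → ℝ)
    (hPstar : ∀ h, h + 1 < H → ∀ s a, IsPMF (Pstar h s a))
    (hr : ∀ h, h < H → ∀ s a, r h s a ∈ Set.Icc (0 : ℝ) 1)
    (gapstar : ℝ) (hgap_pos : 0 < gapstar)
    (hgap : ∀ h, h < H → ∀ s a, a ∉ OptActions Pstar r H h s →
      gapstar ≤ (⨆ a', Qstar Pstar r H h s a') - Qstar Pstar r H h s a)
    (μ α : ℝ) (hμ : 0 < μ) (hα : α ∈ Set.Icc (0 : ℝ) 1) (K : ℕ) (hK : 1 ≤ K)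
    (C : ℝ)
    (hC : C = 0.5 * (Fintype.card 𝒮 : ℝ) * Real.log 2 + μ * (K : ℝ) ^ α)
    (n : ℕ → 𝒮 → 𝒜 → ℕ) (Phat : ℕ → 𝒮 → 𝒜 → 𝒮 → ℝ)
    (hn1 : ∀ h, h + 1 < H → ∀ s a, 1 ≤ n h s a)
    (hPhat : ∀ h, h + 1 < H → ∀ s a, IsPMF (Phat h s a))
    (hconc : ∀ h, h + 1 < H → ∀ s a,
      l1dist (Phat h s a) (Pstar h s a) ≤ 2 * Real.sqrt (C / (n h s a)))
    (hcount : ∀ h, h + 1 < H → ∀ s a,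
      (2 * (Fintype.card 𝒮 : ℝ) * Real.log 2 + 4 * μ * (K : ℝ) ^ α) *
          (2 * H * ((H : ℝ) - h - 1)) ^ 2 / gapstar ^ 2
        < (n h s a : ℝ))
    (b : ℕ → 𝒮 → 𝒜 → ℝ)
    (hb : ∀ h, h + 1 < H → ∀ s a,
      b h s a = ((H : ℝ) - h - 1) * Real.sqrt (C / (n h s a)))
    (hblast : ∀ s a, b (H - 1) s a = 0) :
    ∀ pol : ℕ → 𝒮 → 𝒜,
      (∀ h, h < H → ∀ s,
        Vpi Phat (fun h s a => r h s a + b h s a) pol (H - h) h s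
          = Vstar Phat (fun h s a => r h s a + b h s a) H h s) →
      ∀ h, h < H → ∀ s, pol h s ∈ OptActions Pstar r H h s := by
  classical
  intro pol hpol h hh s
  by_cases hmem : pol h s ∈ OptActions Pstar r H h s
  · exact hmem
  exfalso
  set rb : ℕ → 𝒮 → 𝒜 → ℝ := fun h s a => r h s a + b h s a with hrb_def
  have hr0 : ∀ h, h < H → ∀ s a, 0 ≤ r h s a := fun h hh s a => (hr h hh s a).1
  have hr1 : ∀ h, h < H → ∀ s a, r h s a ≤ 1 := fun h hh s a => (hr h hh s a).2
  have hHpos : (0 : ℝ) < H := by exact_mod_cast hH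
  set δ : ℝ := gapstar / (4 * H) with hδ_def
  have hδ : 0 < δ := by positivity
  have hCpos : 0 < C := by
    rw [hC]
    have h1 : (0 : ℝ) < Fintype.card 𝒮 := by exact_mod_cast Fintype.card_pos
    have h2 : 0 < Real.log 2 := Real.log_pos one_lt_two
    have h3 : (0 : ℝ) < (K : ℝ) ^ α :=
      Real.rpow_pos_of_pos (by exact_mod_cast hK) α
    positivity
  -- key count consequence
  have hsq : ∀ h, h + 1 < H → ∀ s a,
      ((H : ℝ) - h - 1) * Real.sqrt (C / n h s a) ≤ δ := by
    intro h hhH s a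
    have hn : (0 : ℝ) < n h s a := by exact_mod_cast hn1 h hhH s a
    have hHh1 : (1 : ℝ) ≤ (H : ℝ) - h - 1 := by
      have : ((h : ℝ) + 2) ≤ (H : ℝ) := by exact_mod_cast (by omega : h + 2 ≤ H)
      linarith
    set y : ℝ := gapstar / (4 * H * ((H : ℝ) - h - 1)) with hy_def
    have hy : 0 < y := by positivity
    have hA : 2 * (Fintype.card 𝒮 : ℝ) * Real.log 2 + 4 * μ * (K : ℝ) ^ α
        = 4 * C := by rw [hC]; ring
    have hcnt := hcount h hhH s a
    rw [hA] at hcnt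
    have hCn : C / (n h s a : ℝ) < y ^ 2 := by
      rw [div_lt_iff₀ hn]
      have expand : y ^ 2 * (4 * C * (2 * H * ((H : ℝ) - h - 1)) ^ 2 / gapstar ^ 2)
          = C := by
        rw [hy_def]
        field_simp
        ring
      calc C = y ^ 2 * (4 * C * (2 * H * ((H : ℝ) - h - 1)) ^ 2 / gapstar ^ 2) :=
            expand.symm
        _ < y ^ 2 * (n h s a : ℝ) :=
            mul_lt_mul_of_pos_left hcnt (by positivity)
    have hsqrt : Real.sqrt (C / n h s a) < y := (Real.sqrt_lt' hy).mpr hCn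
    have hsqnn := Real.sqrt_nonneg (C / (n h s a : ℝ))
    have : ((H : ℝ) - h - 1) * Real.sqrt (C / n h s a) ≤ ((H : ℝ) - h - 1) * y := by
      nlinarith
    refine this.trans (le_of_eq ?_)
    rw [hy_def, hδ_def]
    field_simp
  have hb0 : ∀ h, h < H → ∀ s a, 0 ≤ b h s a := by
    intro h hhH s a
    rcases Nat.lt_or_ge (h + 1) H with hc | hc
    · rw [hb h hc s a]
      have : ((h : ℝ) + 2) ≤ (H : ℝ) := by exact_mod_cast (by omega : h + 2 ≤ H)
      have h1 : (0 : ℝ) ≤ (H : ℝ) - h - 1 := by linarith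
      exact mul_nonneg h1 (Real.sqrt_nonneg _)
    · rw [(by omega : h = H - 1), hblast]
  have hbδ : ∀ h, h < H → ∀ s a, b h s a ≤ δ := by
    intro h hhH s a
    rcases Nat.lt_or_ge (h + 1) H with hc | hc
    · rw [hb h hc s a]; exact hsq h hc s a
    · rw [(by omega : h = H - 1), hblast]; exact hδ.le
  have hrb0 : ∀ h, h < H → ∀ s a, 0 ≤ rb h s a := by
    intro h hhH s a
    simp only [hrb_def]
    linarith [hr0 h hhH s a, hb0 h hhH s a]
  have hrbR : ∀ h, h < H → ∀ s a, rb h s a ≤ 1 + δ := by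
    intro h hhH s a
    simp only [hrb_def]
    linarith [hr1 h hhH s a, hbδ h hhH s a]
  -- one-step domination
  have step : ∀ h, h + 1 < H → ∀ s a (V W : 𝒮 → ℝ) (M : ℝ),
      (∀ x, 0 ≤ V x) → (∀ x, V x ≤ M) → (∀ x, V x ≤ W x) → M ≤ (H : ℝ) - h - 1 →
      ∑ x, Pstar h s a x * V x ≤ b h s a + ∑ x, Phat h s a x * W x := by
    intro h hhH s a V W M hV0 hVM hVW hM
    have hc := centered_l1 (Pstar h s a) (Phat h s a) V (hPstar h hhH s a)
      (hPhat h hhH s a) hV0 hVM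
    rw [l1dist_comm] at hc
    have h1 : ∑ x, Pstar h s a x * V x
        ≤ ∑ x, Phat h s a x * V x + M / 2 * l1dist (Phat h s a) (Pstar h s a) := by
      have := (le_abs_self (∑ x, Pstar h s a x * V x - ∑ x, Phat h s a x * V x)).trans hc
      linarith
    have h2 : ∑ x, Phat h s a x * V x ≤ ∑ x, Phat h s a x * W x :=
      Finset.sum_le_sum fun x _ =>
        mul_le_mul_of_nonneg_left (hVW x) ((hPhat h hhH s a).1 x)
    have hM0 : 0 ≤ M := le_trans (hV0 (Classical.arbitrary 𝒮)) (hVM _)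
    have h3 : M / 2 * l1dist (Phat h s a) (Pstar h s a)
        ≤ M / 2 * (2 * Real.sqrt (C / n h s a)) :=
      mul_le_mul_of_nonneg_left (hconc h hhH s a) (by positivity)
    have hsqnn := Real.sqrt_nonneg (C / (n h s a : ℝ))
    have h4 : M / 2 * (2 * Real.sqrt (C / n h s a)) ≤ b h s a := by
      rw [hb h hhH s a]
      have e : M / 2 * (2 * Real.sqrt (C / n h s a)) = M * Real.sqrt (C / n h s a) := by
        ring
      rw [e]
      exact mul_le_mul_of_nonneg_right hM hsqnn
    linarith
  -- bounds on true values
  have vpiP_bounds : ∀ t h, h + t ≤ H → ∀ (pol' : ℕ → 𝒮 → 𝒜) x,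
      0 ≤ Vpi Pstar r pol' t h x ∧ Vpi Pstar r pol' t h x ≤ (t : ℝ) := by
    intro t h ht pol' x
    refine ⟨vpi_nonneg hPstar hr0 t h ht pol' x, ?_⟩
    have := (vpi_le_vopt hPstar t h ht pol' x).trans
      (vopt_bounds hPstar hr0 hr1 t h ht x).2
    simpa using this
  -- optimism for Vpi
  have opt_vpi : ∀ t h, h + t ≤ H → ∀ (pol' : ℕ → 𝒮 → 𝒜) x,
      Vpi Pstar r pol' t h x ≤ Vpi Phat rb pol' t h x := by
    intro t
    induction t with
    | zero => intro h _ pol' x; simp [Vpi]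
    | succ t ih =>
      intro h ht pol' x
      show r h x (pol' h x) + ∑ y, Pstar h x (pol' h x) y * Vpi Pstar r pol' t (h + 1) y
          ≤ rb h x (pol' h x) + ∑ y, Phat h x (pol' h x) y * Vpi Phat rb pol' t (h + 1) y
      match t with
      | 0 =>
        simp only [Vpi, mul_zero, Finset.sum_const_zero, add_zero, hrb_def]
        linarith [hb0 h (by omega) x (pol' h x)]
      | t + 1 =>
        have hhH : h + 1 < H := by omega
        have hs := step h hhH x (pol' h x)
          (Vpi Pstar r pol' (t + 1) (h + 1)) (Vpi Phat rb pol' (t + 1) (h + 1))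
          ((t : ℝ) + 1)
          (fun y => (vpiP_bounds (t + 1) (h + 1) (by omega) pol' y).1)
          (fun y => by
            have := (vpiP_bounds (t + 1) (h + 1) (by omega) pol' y).2
            push_cast at this; linarith)
          (fun y => ih (h + 1) (by omega) pol' y)
          (by
            have : ((h : ℝ) + (t + 2)) ≤ (H : ℝ) := by exact_mod_cast ht
            linarith)
        simp only [hrb_def]
        linarith
  have bddP : ∀ (P' : ℕ → 𝒮 → 𝒜 → 𝒮 → ℝ) (r' : ℕ → 𝒮 → 𝒜 → ℝ),
      (∀ h, h + 1 < H → ∀ s a, IsPMF (P' h s a)) → ∀ h, h ≤ H → ∀ x,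
      BddAbove (Set.range fun pol' : ℕ → 𝒮 → 𝒜 => Vpi P' r' pol' (H - h) h x) := by
    intro P' r' hP' h hhH x
    refine ⟨Vopt P' r' (H - h) h x, ?_⟩
    rintro v ⟨pol', rfl⟩
    exact vpi_le_vopt hP' (H - h) h (by omega) pol' x
  have opt_vstar : ∀ h, h ≤ H → ∀ x,
      Vstar Pstar r H h x ≤ Vstar Phat rb H h x := by
    intro h hhH x
    refine ciSup_le fun pol' => le_trans (opt_vpi (H - h) h (by omega) pol' x) ?_
    exact le_ciSup (bddP Phat rb hPhat h hhH x) pol'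
  have opt_qstar : ∀ h, h < H → ∀ x a,
      Qstar Pstar r H h x a ≤ Qstar Phat rb H h x a := by
    intro h hhH x a
    rcases Nat.lt_or_ge (h + 1) H with hc | hc
    · have hVb : ∀ y, 0 ≤ Vstar Pstar r H (h + 1) y ∧
          Vstar Pstar r H (h + 1) y ≤ (H : ℝ) - h - 1 := by
        intro y
        rw [vstar_eq_vopt hPstar (by omega) y]
        obtain ⟨l, u⟩ := vopt_bounds hPstar hr0 hr1 (H - (h + 1)) (h + 1) (by omega) y
        refine ⟨l, u.trans ?_⟩
        have : ((H - (h + 1) : ℕ) : ℝ) = (H : ℝ) - h - 1 := by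
          push_cast [Nat.cast_sub (by omega : h + 1 ≤ H)]; ring
        rw [this]; linarith
      have hs := step h hc x a (Vstar Pstar r H (h + 1)) (Vstar Phat rb H (h + 1))
        ((H : ℝ) - h - 1) (fun y => (hVb y).1) (fun y => (hVb y).2)
        (fun y => opt_vstar (h + 1) (by omega) y) le_rfl
      simp only [Qstar, hrb_def]
      linarith
    · have hH1 : h + 1 = H := by omega
      simp only [Qstar, hrb_def]
      have z1 : ∀ y ∈ Finset.univ, Pstar h x a y * Vstar Pstar r H (h + 1) y = 0 := by
        intro y _; rw [hH1, vstar_horizon, mul_zero]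
      have z2 : ∀ y ∈ Finset.univ, Phat h x a y * Vstar Phat rb H (h + 1) y = 0 := by
        intro y _; rw [hH1, vstar_horizon, mul_zero]
      rw [Finset.sum_congr rfl z1, Finset.sum_congr rfl z2]
      simp only [Finset.sum_const_zero, add_zero]
      linarith [hb0 h hhH x a]
  -- upper bound
  set ε : ℝ := δ * (2 + δ) with hε_def
  have hε : 0 < ε := by positivity
  have hδε : δ ≤ ε := by nlinarith
  have stepU : ∀ t h, h + 1 < H → h + 1 + t ≤ H →
      (∀ y, Vopt Phat rb t (h + 1) y ≤ Vopt Pstar r t (h + 1) y + (t : ℝ) * ε) →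
      ∀ x a, rb h x a + ∑ y, Phat h x a y * Vopt Phat rb t (h + 1) y
        ≤ (r h x a + ∑ y, Pstar h x a y * Vopt Pstar r t (h + 1) y)
          + ((t : ℝ) + 1) * ε := by
    intro t h hhH ht hIH x a
    have hPh := hPhat h hhH x a
    have hPs := hPstar h hhH x a
    have hVb : ∀ y, 0 ≤ Vopt Phat rb t (h + 1) y ∧
        Vopt Phat rb t (h + 1) y ≤ (t : ℝ) * (1 + δ) :=
      fun y => vopt_bounds hPhat hrb0 hrbR t (h + 1) (by omega) y
    have hc := centered_l1 (Phat h x a) (Pstar h x a) (Vopt Phat rb t (h + 1))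
      hPh hPs (fun y => (hVb y).1) (fun y => (hVb y).2)
    have h1 : ∑ y, Phat h x a y * Vopt Phat rb t (h + 1) y
        ≤ ∑ y, Pstar h x a y * Vopt Phat rb t (h + 1) y
          + (t : ℝ) * (1 + δ) / 2 * l1dist (Phat h x a) (Pstar h x a) := by
      have := (le_abs_self (∑ y, Phat h x a y * Vopt Phat rb t (h + 1) y
        - ∑ y, Pstar h x a y * Vopt Phat rb t (h + 1) y)).trans hc
      linarith
    have htnn : (0 : ℝ) ≤ (t : ℝ) := Nat.cast_nonneg t
    have h2 : (t : ℝ) * (1 + δ) / 2 * l1dist (Phat h x a) (Pstar h x a)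
        ≤ (t : ℝ) * (1 + δ) / 2 * (2 * Real.sqrt (C / n h x a)) :=
      mul_le_mul_of_nonneg_left (hconc h hhH x a) (by positivity)
    have hsq' := hsq h hhH x a
    have hsqnn := Real.sqrt_nonneg (C / (n h x a : ℝ))
    have htH : (t : ℝ) ≤ (H : ℝ) - h - 1 := by
      have : ((h : ℝ) + 1 + t) ≤ (H : ℝ) := by exact_mod_cast ht
      linarith
    have h3 : (t : ℝ) * (1 + δ) / 2 * (2 * Real.sqrt (C / n h x a)) ≤ δ * (1 + δ) := by
      have e : (t : ℝ) * (1 + δ) / 2 * (2 * Real.sqrt (C / n h x a))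
          = (1 + δ) * ((t : ℝ) * Real.sqrt (C / n h x a)) := by ring
      rw [e]
      have h31 : (t : ℝ) * Real.sqrt (C / n h x a) ≤ δ :=
        le_trans (mul_le_mul_of_nonneg_right htH hsqnn) hsq'
      have h32 : (0 : ℝ) ≤ 1 + δ := by linarith
      calc (1 + δ) * ((t : ℝ) * Real.sqrt (C / n h x a)) ≤ (1 + δ) * δ :=
            mul_le_mul_of_nonneg_left h31 h32
        _ = δ * (1 + δ) := mul_comm _ _
    have h4 : ∑ y, Pstar h x a y * Vopt Phat rb t (h + 1) y
        ≤ ∑ y, Pstar h x a y * (Vopt Pstar r t (h + 1) y + (t : ℝ) * ε) :=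
      Finset.sum_le_sum fun y _ =>
        mul_le_mul_of_nonneg_left (hIH y) (hPs.1 y)
    have h5 : ∑ y, Pstar h x a y * (Vopt Pstar r t (h + 1) y + (t : ℝ) * ε)
        = ∑ y, Pstar h x a y * Vopt Pstar r t (h + 1) y + (t : ℝ) * ε := by
      calc ∑ y, Pstar h x a y * (Vopt Pstar r t (h + 1) y + (t : ℝ) * ε)
          = ∑ y, (Pstar h x a y * Vopt Pstar r t (h + 1) y
              + Pstar h x a y * ((t : ℝ) * ε)) :=
            Finset.sum_congr rfl fun y _ => by ring
        _ = ∑ y, Pstar h x a y * Vopt Pstar r t (h + 1) y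
              + (∑ y, Pstar h x a y) * ((t : ℝ) * ε) := by
            rw [Finset.sum_add_distrib, Finset.sum_mul]
        _ = ∑ y, Pstar h x a y * Vopt Pstar r t (h + 1) y + (t : ℝ) * ε := by
            rw [hPs.2, one_mul]
    have hbδ' := hbδ h (by omega) x a
    have hεexp : δ + δ * (1 + δ) = ε := by rw [hε_def]; ring
    simp only [hrb_def]
    linarith
  have VU : ∀ t h, h + t ≤ H → ∀ x,
      Vopt Phat rb t h x ≤ Vopt Pstar r t h x + (t : ℝ) * ε := by
    intro t
    induction t with
    | zero => intro h _ x; simp [Vopt]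
    | succ t ih =>
      intro h ht x
      have hub : ∀ a, r h x a + ∑ y, Pstar h x a y * Vopt Pstar r t (h + 1) y
          ≤ Vopt Pstar r (t + 1) h x := by
        intro a
        simp only [Vopt]
        exact le_ciSup (f := fun a : 𝒜 => r h x a
          + ∑ y, Pstar h x a y * Vopt Pstar r t (h + 1) y) (aux_bdd _) a
      show (⨆ a : 𝒜, (rb h x a + ∑ y, Phat h x a y * Vopt Phat rb t (h + 1) y)) ≤ _
      refine ciSup_le fun a => ?_
      match t with
      | 0 =>
        have h0 := hub a
        simp only [Vopt, mul_zero, Finset.sum_const_zero, add_zero] at h0 ⊢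
        have hbδ' := hbδ h (by omega) x a
        simp only [hrb_def]
        push_cast
        linarith
      | t + 1 =>
        have hs := stepU (t + 1) h (by omega) (by omega)
          (fun y => ih (h + 1) (by omega) y) x a
        have h0 := hub a
        push_cast at hs ⊢
        linarith
  have QU : ∀ h, h < H → ∀ x a,
      Qstar Phat rb H h x a ≤ Qstar Pstar r H h x a + ((H : ℝ) - h) * ε := by
    intro h hhH x a
    rcases Nat.lt_or_ge (h + 1) H with hc | hc
    · have hs := stepU (H - (h + 1)) h hc (by omega)
        (fun y => VU (H - (h + 1)) (h + 1) (by omega) y) x a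
      have e1 : ∀ y ∈ Finset.univ, Phat h x a y * Vstar Phat rb H (h + 1) y
          = Phat h x a y * Vopt Phat rb (H - (h + 1)) (h + 1) y := fun y _ => by
        rw [vstar_eq_vopt hPhat (by omega) y]
      have e2 : ∀ y ∈ Finset.univ, Pstar h x a y * Vstar Pstar r H (h + 1) y
          = Pstar h x a y * Vopt Pstar r (H - (h + 1)) (h + 1) y := fun y _ => by
        rw [vstar_eq_vopt hPstar (by omega) y]
      have hcast : ((H - (h + 1) : ℕ) : ℝ) + 1 = (H : ℝ) - h := by
        push_cast [Nat.cast_sub (by omega : h + 1 ≤ H)]; ring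
      simp only [Qstar]
      rw [Finset.sum_congr rfl e1, Finset.sum_congr rfl e2]
      rw [hcast] at hs
      exact hs
    · have hH1 : h + 1 = H := by omega
      simp only [Qstar, hrb_def]
      have z1 : ∀ y ∈ Finset.univ, Pstar h x a y * Vstar Pstar r H (h + 1) y = 0 := by
        intro y _; rw [hH1, vstar_horizon, mul_zero]
      have z2 : ∀ y ∈ Finset.univ, Phat h x a y * Vstar Phat rb H (h + 1) y = 0 := by
        intro y _; rw [hH1, vstar_horizon, mul_zero]
      rw [Finset.sum_congr rfl z1, Finset.sum_congr rfl z2]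
      simp only [Finset.sum_const_zero, add_zero]
      have hb' : b h x a = 0 := by rw [(by omega : h = H - 1), hblast]
      have hHh : (1 : ℝ) ≤ (H : ℝ) - h := by
        have : ((h : ℝ) + 1) ≤ (H : ℝ) := by exact_mod_cast hhH
        linarith
      nlinarith
  -- the greedy policy value equals its Qstar
  have hpolv := hpol h hh s
  have ht' : H - h = (H - (h + 1)) + 1 := by omega
  rw [ht'] at hpolv
  simp only [Vpi] at hpolv
  have hnext : ∀ y ∈ Finset.univ,
      Phat h s (pol h s) y * Vpi Phat rb pol (H - (h + 1)) (h + 1) y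
        = Phat h s (pol h s) y * Vstar Phat rb H (h + 1) y := by
    intro y _
    rcases Nat.lt_or_ge (h + 1) H with hc | hc
    · rw [hpol (h + 1) hc y]
    · have h0 : H - (h + 1) = 0 := by omega
      rw [h0, (by omega : h + 1 = H), vstar_horizon]
      simp [Vpi]
  rw [Finset.sum_congr rfl hnext] at hpolv
  have hpv : Qstar Phat rb H h s (pol h s) = Vstar Phat rb H h s := by
    rw [← hpolv]; rfl
  -- assemble the contradiction
  obtain ⟨astar, hastar⟩ := Finite.exists_max (fun a' : 𝒜 => Qstar Pstar r H h s a')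
  have hsup : (⨆ a', Qstar Pstar r H h s a') = Qstar Pstar r H h s astar :=
    le_antisymm (ciSup_le hastar) (le_ciSup (aux_bdd _) astar)
  have hg := hgap h hh s (pol h s) hmem
  rw [hsup] at hg
  have hQa := qstar_bounds (R := 1) hPstar hr0 hr1 zero_le_one hh s (pol h s)
  have hQs := qstar_bounds (R := 1) hPstar hr0 hr1 zero_le_one hh s astar
  have hcast0 : (0 : ℝ) ≤ (h : ℝ) := Nat.cast_nonneg h
  have hQs2 : Qstar Pstar r H h s astar ≤ (H : ℝ) - h := by
    have := hQs.2; linarith [this.trans (le_of_eq (mul_one _))]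
  have hgapH : gapstar ≤ (H : ℝ) := by linarith [hQa.1, hQs2]
  have c1 : Qstar Phat rb H h s astar ≤ Qstar Phat rb H h s (pol h s) := by
    rw [hpv]; exact qstar_le_vstar hPhat hh s astar
  have c2 := opt_qstar h hh s astar
  have c3 := QU h hh s (pol h s)
  have c4 : gapstar ≤ ((H : ℝ) - h) * ε := by linarith
  have c5 : gapstar ≤ (H : ℝ) * ε := by
    nlinarith [mul_nonneg hcast0 hε.le]
  have hδeq : 4 * (H : ℝ) * δ = gapstar := by rw [hδ_def]; field_simp
  have hδ14 : δ ≤ 1 / 4 := by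
    rw [hδ_def, div_le_iff₀ (by positivity)]
    linarith
  have e : (H : ℝ) * ε * 4 = gapstar * (2 + δ) := by
    rw [hε_def]
    linear_combination (2 + δ) * hδeq
  nlinarith [c5, e, mul_le_mul_of_nonneg_left hδ14 hgap_pos.le]
end
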